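/- arXiv:2212.07343 — 3 statements merged into one kernel-verified Lean document; each statement's English description precedes it below -/
import Mathlib

section
/- Let t ≥ 2 be an integer and λ a partition of length at most nt. If t-core(λ) is orthogonal, then rk(t-core(λ)) = Σ_{r=1}^{⌊(t−1)/2⌋} |m_r(λ;nt) − n| = Σ_{r=⌊(t+2)/2⌋}^{t−1} |m_r(λ;nt) − n|. If t-core(λ) is symplectic, then rk(t-core(λ)) = Σ_{r=0}^{⌊(t−3)/2⌋} |m_r(λ;nt) − n| = Σ_{r=⌊t/2⌋}^{t−2} |m_r(λ;nt) − n|. If t-core(λ) is self-conjugate, then rk(t-core(λ)) = Σ_{r=0}^{⌊(t−2)/2⌋} |m_r(λ;nt) − n| = Σ_{r=⌊(t+1)/2⌋}^{t−1} |m_r(λ;nt) − n|. -/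
open scoped BigOperators

noncomputable section

/-! ## The ring of symmetric functions and basic operators -/

/-- The ring of symmetric functions `Λ` (with coefficients in `ℚ`, so that the
half occurring in the definition of `sp_λ` is available), realised as the
polynomial ring in the algebraically independent complete homogeneous symmetric
functions `h₁, h₂, h₃, …`; the variable `n : ℕ` stands for `h_{n+1}`. -/
abbrev SymF : Type := MvPolynomial ℕ ℚ

/-- The complete homogeneous symmetric function `h_r ∈ Λ`, with `h_0 = 1` and
`h_r = 0` for `r < 0`. -/
def hh (r : ℤ) : SymF :=
  if r < 0 then 0 else if r = 0 then 1 else MvPolynomial.X (r.toNat - 1)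

/-- The algebra homomorphism `φ_t : Λ → Λ` determined by `φ_t h_r = h_{r/t}`
if `t ∣ r` and `φ_t h_r = 0` otherwise. -/
def phi (t : ℕ) : SymF →ₐ[ℚ] SymF :=
  MvPolynomial.aeval fun n =>
    if t ∣ (n + 1) then hh (((n + 1) / t : ℕ) : ℤ) else 0

/-- The elementary symmetric function `e_r`, via the Jacobi–Trudi determinant
`e_r = s_{(1^r)} = det_{1 ≤ i,j ≤ r}(h_{1 - i + j})`. -/
def ee (r : ℕ) : SymF :=
  Matrix.det (Matrix.of fun i j : Fin r => hh (1 + (j : ℤ) - (i : ℤ)))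

/-- The involution `ω : Λ → Λ`, determined by `ω h_r = e_r`. -/
def omegaSym : SymF →ₐ[ℚ] SymF :=
  MvPolynomial.aeval fun n => ee (n + 1)

/-- `(-1)^z` for an integer exponent `z`. -/
def msign (z : ℤ) : ℤ := if Even z then 1 else -1

/-! ## Partitions -/

/-- A partition, encoded as a weakly decreasing, eventually zero function
`ℕ → ℕ` (0-indexed: `f i` is the part `λ_{i+1}`). -/
def IsPartition (f : ℕ → ℕ) : Prop :=
  Antitone f ∧ ∃ N, ∀ i, N ≤ i → f i = 0

/-- The length `l(λ)` (number of nonzero parts). -/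
def plen (f : ℕ → ℕ) : ℕ := sInf {N | ∀ i, N ≤ i → f i = 0}

/-- Containment `μ ⊆ λ` of partitions. -/
def SubP (mu lam : ℕ → ℕ) : Prop := ∀ i, mu i ≤ lam i

/-- The conjugate partition `λ'`. -/
def conjP (f : ℕ → ℕ) : ℕ → ℕ := fun j => Set.ncard {i | j < f i}

/-- The Frobenius rank `rk(λ)` (side length of the Durfee square). -/
def rk (f : ℕ → ℕ) : ℕ := Set.ncard {i | i < f i}

/-- The size `|λ|` of a partition. -/
def psize (f : ℕ → ℕ) : ℕ := ∑ i ∈ Finset.range (plen f), f i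

/-- `λ` is `z`-asymmetric, i.e. `λ = (a | a + z)` in Frobenius notation, which
amounts to `λ'_i = λ_i + z` for all `1 ≤ i ≤ rk(λ)`.  `(-1)`-asymmetric
partitions are called orthogonal, `1`-asymmetric ones symplectic, and
`0`-asymmetric ones are exactly the self-conjugate ones. -/
def ZAsymmetric (z : ℤ) (f : ℕ → ℕ) : Prop :=
  ∀ i < rk f, (conjP f i : ℤ) = (f i : ℤ) + z

/-- The one-row partition `(c)`. -/
def rowP (c : ℕ) : ℕ → ℕ := fun i => if i = 0 then c else 0

/-- `λ` is a `t`-core: no box of the Young diagram has hook length `t`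
(the hook length of the box `(i,j)` is `λ_i + λ'_j - i - j + 1`, 1-indexed). -/
def IsTCore (t : ℕ) (f : ℕ → ℕ) : Prop :=
  ∀ i j, j < f i → f i + conjP f j ≠ i + j + 1 + t

/-! ## Schur functions and universal characters via Jacobi–Trudi determinants -/

/-- The Jacobi–Trudi determinant `det_{1 ≤ i,j ≤ n}(h_{λ_i - μ_j - i + j})`. -/
def sSkewN (lam mu : ℕ → ℕ) (n : ℕ) : SymF :=
  Matrix.det (Matrix.of fun i j : Fin n =>
    hh ((lam i : ℤ) - (mu j : ℤ) - (i : ℤ) + (j : ℤ)))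

open Classical in
/-- The skew Schur function `s_{λ/μ}`, defined by the Jacobi–Trudi formula
(and `0` if `μ ⊄ λ`). -/
def sSkew (lam mu : ℕ → ℕ) : SymF :=
  if SubP mu lam then sSkewN lam mu (plen lam) else 0

/-- The Schur function `s_λ`. -/
def sFun (lam : ℕ → ℕ) : SymF := sSkew lam fun _ => 0

/-- The universal orthogonal character
`o_λ = det_{1 ≤ i,j ≤ n}(h_{λ_i - i + j} - h_{λ_i - i - j})`. -/
def oU (lam : ℕ → ℕ) : SymF :=
  Matrix.det (Matrix.of fun i j : Fin (plen lam) =>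
    hh ((lam i : ℤ) - (i : ℤ) + (j : ℤ)) -
      hh ((lam i : ℤ) - (i : ℤ) - (j : ℤ) - 2))

/-- The universal symplectic character
`sp_λ = (1/2) · det_{1 ≤ i,j ≤ n}(h_{λ_i - i + j} + h_{λ_i - i - j + 2})`. -/
def spU (lam : ℕ → ℕ) : SymF :=
  (1 / 2 : ℚ) • Matrix.det (Matrix.of fun i j : Fin (plen lam) =>
    hh ((lam i : ℤ) - (i : ℤ) + (j : ℤ)) +
      hh ((lam i : ℤ) - (i : ℤ) - (j : ℤ)))

/-- The universal odd orthogonal character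
`so_λ = det_{1 ≤ i,j ≤ n}(h_{λ_i - i + j} + h_{λ_i - i - j + 1})`. -/
def soU (lam : ℕ → ℕ) : SymF :=
  Matrix.det (Matrix.of fun i j : Fin (plen lam) =>
    hh ((lam i : ℤ) - (i : ℤ) + (j : ℤ)) +
      hh ((lam i : ℤ) - (i : ℤ) - (j : ℤ) - 1))

/-- The variant `so⁻_λ = det_{1 ≤ i,j ≤ n}(h_{λ_i - i + j} - h_{λ_i - i - j + 1})`. -/
def soMinusU (lam : ℕ → ℕ) : SymF :=
  Matrix.det (Matrix.of fun i j : Fin (plen lam) =>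
    hh ((lam i : ℤ) - (i : ℤ) + (j : ℤ)) -
      hh ((lam i : ℤ) - (i : ℤ) - (j : ℤ) - 1))

/-- The rational universal character `rs_{λ,μ}` (one alphabet), via Koike's block
determinant, for weakly decreasing integer sequences `λ`, `μ` of lengths `n`, `m`. -/
def rsN (n m : ℕ) (lam mu : ℕ → ℤ) : SymF :=
  Matrix.det (Matrix.fromBlocks
    (Matrix.of fun i j : Fin n => hh (lam i - (i : ℤ) + (j : ℤ)))
    (Matrix.of fun (i : Fin n) (j : Fin m) => hh (lam i - (i : ℤ) - (j : ℤ) - 1))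
    (Matrix.of fun (i : Fin m) (j : Fin n) => hh (mu i - (i : ℤ) - (j : ℤ) - 1))
    (Matrix.of fun i j : Fin m => hh (mu i - (i : ℤ) + (j : ℤ))))

/-- `rs_{λ,μ}` for partitions `λ`, `μ`. -/
def rsP (lam mu : ℕ → ℕ) : SymF :=
  rsN (plen lam) (plen mu) (fun i => (lam i : ℤ)) fun i => (mu i : ℤ)

/-! ## Beta sets, cores, quotients and signs -/

/-- The beta set `β(λ; N) = {λ_i + N - i : 1 ≤ i ≤ N}`. -/
def betaSet (lam : ℕ → ℕ) (N : ℕ) : Finset ℕ :=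
  (Finset.range N).image fun i => lam i + (N - 1 - i)

/-- `m_r(λ; N)`: the number of elements of `β(λ; N)` congruent to `r` mod `t`. -/
def mr (t : ℕ) (lam : ℕ → ℕ) (N r : ℕ) : ℕ :=
  ((betaSet lam N).filter fun x => x % t = r).card

/-- The `r`-th component `λ^{(r)}` of the `t`-quotient of `λ` (computed, as per
the convention of the paper, from a beta set whose size is a multiple of `t`):
writing the elements of `β(λ; N)` in residue class `r` as `ξ_k t + r` with
`ξ_1 > ⋯ > ξ_m ≥ 0`, the `k`-th part is `ξ_k - m + k`. -/
def tQuot (t : ℕ) (lam : ℕ → ℕ) (r : ℕ) : ℕ → ℕ := fun k =>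
  let N := t * (plen lam + 1)
  let S := (betaSet lam N).filter fun x => x % t = r
  if k < S.card then (S.sort (· ≤ ·)).getD (S.card - 1 - k) 0 / t + (k + 1) - S.card
  else 0

/-- The `t`-core of `λ`: its `i`-th part is `ξ̃_i - N + i` where
`ξ̃_1 > ⋯ > ξ̃_N` are the integers `k t + r`, `0 ≤ k < m_r(λ; N)`, `0 ≤ r < t`. -/
def tCore (t : ℕ) (lam : ℕ → ℕ) : ℕ → ℕ := fun i =>
  let N := t * (plen lam + 1)
  let T := (Finset.range t).biUnion fun r =>
    (Finset.range (mr t lam N r)).image fun k => k * t + r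
  if i < N then (T.sort (· ≤ ·)).getD (N - 1 - i) 0 + (i + 1) - N else 0

/-- The sign of the permutation `w_t(λ; N)` sorting the beta set so that the
residues mod `t` increase and the entries within a residue class decrease,
computed as `(-1)` to the number of inversions: an inversion is a pair
`x > y` of elements of the beta set with `x mod t > y mod t`. -/
def sgnW (t : ℕ) (lam : ℕ → ℕ) (N : ℕ) : ℤ :=
  (-1) ^ ((betaSet lam N ×ˢ betaSet lam N).filter fun p : ℕ × ℕ =>
    p.2 < p.1 ∧ p.2 % t < p.1 % t).card

/-! ## Ribbons and tileability -/

/-- The cells of the skew shape `λ/μ` (0-indexed rows and columns). -/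
def SkewCells (lam mu : ℕ → ℕ) : Set (ℕ × ℕ) := {c | mu c.1 ≤ c.2 ∧ c.2 < lam c.1}

/-- Two cells are adjacent if they share an edge. -/
def CellAdj (c d : ℕ × ℕ) : Prop :=
  (c.1 = d.1 ∧ (c.2 + 1 = d.2 ∨ d.2 + 1 = c.2)) ∨
    (c.2 = d.2 ∧ (c.1 + 1 = d.1 ∨ d.1 + 1 = c.1))

/-- A set of cells is (edge-)connected. -/
def ConnectedCells (S : Set (ℕ × ℕ)) : Prop :=
  ∀ c ∈ S, ∀ d ∈ S, Relation.ReflTransGen (fun x y => x ∈ S ∧ y ∈ S ∧ CellAdj x y) c d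

/-- The set of cells contains a `2 × 2` square. -/
def Has2x2 (S : Set (ℕ × ℕ)) : Prop :=
  ∃ i j, (i, j) ∈ S ∧ (i + 1, j) ∈ S ∧ (i, j + 1) ∈ S ∧ (i + 1, j + 1) ∈ S

/-- The skew shape `λ/μ` is a `t`-ribbon: connected, `t` cells, no `2 × 2` square. -/
def IsRibbon (t : ℕ) (lam mu : ℕ → ℕ) : Prop :=
  SubP mu lam ∧ (SkewCells lam mu).ncard = t ∧
    ConnectedCells (SkewCells lam mu) ∧ ¬Has2x2 (SkewCells lam mu)

/-- The height of a ribbon `λ/μ`: one less than the number of rows it occupies. -/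
def ribbonHeight (lam mu : ℕ → ℕ) : ℕ :=
  (Prod.fst '' SkewCells lam mu).ncard - 1

/-- `ν` (as `ν 0, ν 1, …, ν k`) is a ribbon decomposition of the skew shape
`λ/μ` into `t`-ribbons: `ν 0 = μ`, `ν k = λ`, every `ν i` is a partition, and
each `ν (i+1) / ν i` is a `t`-ribbon. -/
def IsRibbonDecomp (t : ℕ) (mu lam : ℕ → ℕ) (k : ℕ) (ν : ℕ → ℕ → ℕ) : Prop :=
  ν 0 = mu ∧ ν k = lam ∧ (∀ i ≤ k, IsPartition (ν i)) ∧
    ∀ i < k, IsRibbon t (ν (i + 1)) (ν i)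

/-- The height of a ribbon decomposition: the sum of the heights of its ribbons.
The sign `sgn_t(λ/μ)` is `(-1)` to this quantity (for any decomposition). -/
def decompHeight (ν : ℕ → ℕ → ℕ) (k : ℕ) : ℕ :=
  ∑ i ∈ Finset.range k, ribbonHeight (ν (i + 1)) (ν i)

/-- The skew shape `λ/μ` is tileable by `t`-ribbons. -/
def Tileable (t : ℕ) (mu lam : ℕ → ℕ) : Prop :=
  ∃ k ν, IsRibbonDecomp t mu lam k ν

/-! ## The signs `ε` of Ayyer–Kumari -/

/-- The exponent `ε^o_{λ;nt}`. -/
def epsO (t : ℕ) (lam : ℕ → ℕ) (n : ℕ) : ℕ :=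
  (∑ r ∈ Finset.Icc ((t + 2) / 2) (t - 1), Nat.choose (mr t lam (n * t) r + 1) 2)
    + rk (tCore t lam)
    + if 2 ∣ t then Nat.choose (n + 1) 2 + n * rk (tCore t lam) else 0

/-- The exponent `ε^sp_{λ;nt}`. -/
def epsSp (t : ℕ) (lam : ℕ → ℕ) (n : ℕ) : ℕ :=
  (∑ r ∈ Finset.Icc (t / 2) (t - 2), Nat.choose (mr t lam (n * t) r + 1) 2)
    + if 2 ∣ t then Nat.choose (n + 1) 2 + n * rk (tCore t lam) else 0

/-- The exponent `ε^so_{λ;nt}`. -/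
def epsSo (t : ℕ) (lam : ℕ → ℕ) (n : ℕ) : ℕ :=
  (∑ r ∈ Finset.Icc ((t + 1) / 2) (t - 1), Nat.choose (mr t lam (n * t) r + 1) 2)
    + if 2 ∣ t then 0 else n * rk (tCore t lam)

/-! ## Evaluation at a finite complex alphabet -/

/-- The complete homogeneous polynomial `h_r(y₁,…,y_N)` evaluated at complex
numbers: the sum over all multisets of size `r` of the product of the values. -/
def hEval {N : ℕ} (y : Fin N → ℂ) (r : ℕ) : ℂ :=
  ∑ m ∈ (Finset.univ : Finset (Fin N)).sym r, (Multiset.map y (m : Multiset (Fin N))).prod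

/-- Evaluation of a universal symmetric function at the finite alphabet
`y₁, …, y_N` (substituting `h_r ↦ h_r(y)`). -/
def evalSym {N : ℕ} (y : Fin N → ℂ) : SymF →ₐ[ℚ] ℂ :=
  MvPolynomial.aeval fun n => hEval y (n + 1)

/-- The Schur polynomial `s_λ(y₁,…,y_N)` (equal to the ratio of alternants when
the `y_i` are distinct, and `0` when `l(λ) > N`). -/
def schurC {N : ℕ} (lam : ℕ → ℕ) (y : Fin N → ℂ) : ℂ := evalSym y (sFun lam)

/-- The algebra homomorphism `φ_t^q : Λ → Λ[q]` with
`φ_t^q h_{at+b} = q^b ∑_{k ≥ 0} q^{kt} h_{a-k}` for `a ≥ 0`, `0 ≤ b ≤ t-1`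
(the sum is finite since `h_{a-k} = 0` for `k > a`). -/
def phiQ (t : ℕ) : SymF →ₐ[ℚ] Polynomial SymF :=
  MvPolynomial.aeval fun m =>
    ∑ k ∈ Finset.range ((m + 1) / t + 1),
      Polynomial.C (hh ((((m + 1) / t - k : ℕ)) : ℤ)) *
        Polynomial.X ^ ((m + 1) % t + k * t)


section AKAux
open Finset

variable {f : ℕ → ℕ}

lemma AK.plen_zero (h : IsPartition f) : ∀ i, plen f ≤ i → f i = 0 := by
  have hne : {N | ∀ i, N ≤ i → f i = 0}.Nonempty := h.2
  have := Nat.sInf_mem hne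
  exact this

lemma AK.plen_le {N : ℕ} (h : ∀ i, N ≤ i → f i = 0) : plen f ≤ N :=
  Nat.sInf_le h

lemma AK.lt_plen_of_ne (h : IsPartition f) {i : ℕ} (hi : f i ≠ 0) : i < plen f := by
  by_contra hc
  exact hi (AK.plen_zero h i (by omega))

lemma AK.mem_betaSet {N x : ℕ} :
    x ∈ betaSet f N ↔ ∃ i < N, x = f i + (N - 1 - i) := by
  simp [betaSet, eq_comm]

lemma AK.beta_strictAnti (h : Antitone f) {i j N : ℕ} (hij : i < j) (hj : j < N) :
    f j + (N - 1 - j) < f i + (N - 1 - i) := by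
  have := h hij.le
  omega

lemma AK.betaSet_card (h : Antitone f) (N : ℕ) : (betaSet f N).card = N := by
  rw [betaSet, Finset.card_image_of_injOn, Finset.card_range]
  intro i hi j hj hij
  simp only [Finset.coe_range, Set.mem_Iio] at hi hj
  by_contra hne
  rcases Nat.lt_or_ge i j with hlt | hge
  · exact absurd hij (AK.beta_strictAnti h hlt hj).ne'
  · exact absurd hij.symm (AK.beta_strictAnti h (by omega) hi).ne'

lemma AK.sum_mr (h : Antitone f) {t : ℕ} (ht : 0 < t) (N : ℕ) :
    ∑ r ∈ Finset.range t, mr t f N r = N := by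
  have := Finset.card_eq_sum_card_fiberwise
    (f := fun x => x % t) (s := betaSet f N) (t := Finset.range t)
    (fun x _ => Finset.mem_range.mpr (Nat.mod_lt _ ht))
  rw [AK.betaSet_card h] at this
  conv_rhs => rw [this]
  exact Finset.sum_congr rfl fun r _ => rfl

lemma AK.betaSet_add (h : IsPartition f) {N t : ℕ} (hN : plen f ≤ N) :
    betaSet f (N + t) = ((betaSet f N).image (· + t)) ∪ Finset.range t := by
  ext x
  simp only [AK.mem_betaSet, Finset.mem_union, Finset.mem_image, Finset.mem_range]
  constructor
  · rintro ⟨i, hi, rfl⟩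
    rcases Nat.lt_or_ge i N with hiN | hiN
    · left; exact ⟨f i + (N - 1 - i), ⟨i, hiN, rfl⟩, by omega⟩
    · right
      have : f i = 0 := AK.plen_zero h i (by omega)
      omega
  · rintro (⟨y, ⟨i, hi, rfl⟩, rfl⟩ | hx)
    · exact ⟨i, by omega, by omega⟩
    · refine ⟨N + t - 1 - x, by omega, ?_⟩
      have : f (N + t - 1 - x) = 0 := AK.plen_zero h _ (by omega)
      omega

lemma AK.mr_add (h : IsPartition f) {N t r : ℕ} (hN : plen f ≤ N) (hr : r < t) :
    mr t f (N + t) r = mr t f N r + 1 := by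
  unfold mr
  rw [AK.betaSet_add h hN, Finset.filter_union]
  rw [Finset.card_union_of_disjoint, Finset.filter_image]
  · have h1 : Finset.card ((betaSet f N).filter (fun x => (x + t) % t = r)) =
        mr t f N r := by
      unfold mr
      congr 1
      apply Finset.filter_congr
      intro x _
      simp [Nat.add_mod_right]
    have h2 : (Finset.range t).filter (fun x => x % t = r) = {r} := by
      ext x
      simp only [Finset.mem_filter, Finset.mem_range, Finset.mem_singleton]
      constructor
      · rintro ⟨hx, rfl⟩; exact (Nat.mod_eq_of_lt hx).symm ▸ rfl
      · rintro rfl; exact ⟨hr, Nat.mod_eq_of_lt hr⟩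
    rw [Finset.card_image_of_injective _ (add_left_injective t), h1, h2,
      Finset.card_singleton]
    rfl
  · rw [Finset.disjoint_left]
    rintro x hx hx'
    simp only [Finset.mem_filter, Finset.mem_image, Finset.mem_range] at hx hx'
    obtain ⟨⟨y, hy, rfl⟩, -⟩ := hx
    omega

lemma AK.mr_add_mul (h : IsPartition f) {N t r : ℕ} (hN : plen f ≤ N) (hr : r < t) (j : ℕ) :
    mr t f (N + j * t) r = mr t f N r + j := by
  induction j with
  | zero => simp
  | succ k ih =>
      have : N + (k+1) * t = (N + k * t) + t := by ring
      rw [this, AK.mr_add h (by omega) hr, ih]; omega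

end AKAux
section AKCore
open Finset

lemma AK.sorted_get_le (l : List ℕ) (hl : l.Pairwise (· < ·)) :
    ∀ d a (h : a + d < l.length), l.get ⟨a, by omega⟩ + d ≤ l.get ⟨a + d, h⟩ := by
  intro d
  induction d with
  | zero => intro a h; simp
  | succ k ih =>
      intro a h
      have h1 := ih a (by omega)
      have h2 : l.get ⟨a + k, by omega⟩ < l.get ⟨a + (k + 1), h⟩ :=
        List.pairwise_iff_get.mp hl ⟨a + k, by omega⟩ ⟨a + (k + 1), h⟩ (Fin.mk_lt_mk.mpr (by omega))
      omega

namespace AK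

variable (t : ℕ) (lam : ℕ → ℕ)

/-- `N₀`, the beta-set size used in the definition of `tCore`. -/
def N0 : ℕ := t * (plen lam + 1)

/-- `m_r(λ; N₀)`. -/
def m (r : ℕ) : ℕ := mr t lam (N0 t lam) r

/-- The beta set of the core. -/
def T : Finset ℕ :=
  (Finset.range t).biUnion fun r => (Finset.range (m t lam r)).image fun k => k * t + r

/-- The sorted list of `T`. -/
def L : List ℕ := (T t lam).sort (· ≤ ·)

/-- The `i`-th largest element of `T` (`0`-indexed). -/
def s (i : ℕ) : ℕ := (L t lam).getD (N0 t lam - 1 - i) 0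

lemma tCore_eq : tCore t lam = fun i =>
    if i < N0 t lam then s t lam i + (i + 1) - N0 t lam else 0 := rfl

variable {t lam}

lemma mul_add_mod' {r : ℕ} (k : ℕ) (hr : r < t) : (k * t + r) % t = r := by
  rw [Nat.mul_comm, Nat.mul_add_mod]; exact Nat.mod_eq_of_lt hr

lemma mem_T {x : ℕ} : x ∈ T t lam ↔ ∃ r < t, ∃ k < m t lam r, x = k * t + r := by
  simp only [T, Finset.mem_biUnion, Finset.mem_range, Finset.mem_image]
  constructor
  · rintro ⟨r, hr, k, hk, he⟩; exact ⟨r, hr, k, hk, he.symm⟩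
  · rintro ⟨r, hr, k, hk, he⟩; exact ⟨r, hr, k, hk, he.symm⟩

lemma T_filter {r : ℕ} (ht : 0 < t) (hr : r < t) :
    (T t lam).filter (fun x => x % t = r) =
      (Finset.range (m t lam r)).image fun k => k * t + r := by
  ext x
  simp only [Finset.mem_filter, mem_T, Finset.mem_image, Finset.mem_range]
  constructor
  · rintro ⟨⟨r', hr', k, hk, rfl⟩, hmod⟩
    have h' : (k * t + r') % t = r' := mul_add_mod' k hr'
    rw [h'] at hmod
    subst hmod
    exact ⟨k, hk, rfl⟩
  · rintro ⟨k, hk, he⟩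
    subst he
    exact ⟨⟨r, hr, k, hk, rfl⟩, mul_add_mod' k hr⟩

lemma card_T (hlam : IsPartition lam) (ht : 0 < t) : (T t lam).card = N0 t lam := by
  rw [T, Finset.card_biUnion]
  · have : ∀ r ∈ Finset.range t,
        ((Finset.range (m t lam r)).image fun k => k * t + r).card = m t lam r := by
      intro r _
      rw [Finset.card_image_of_injective, Finset.card_range]
      intro a b hab
      have : a * t + r = b * t + r := hab
      exact Nat.eq_of_mul_eq_mul_right ht (by omega)
    rw [Finset.sum_congr rfl this]
    exact AK.sum_mr hlam.1 ht _
  · intro r hr r' hr' hne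
    rw [Function.onFun, Finset.disjoint_left]
    rintro x hx hx'
    simp only [Finset.mem_image, Finset.mem_range] at hx hx'
    obtain ⟨k, -, rfl⟩ := hx
    obtain ⟨k', -, he⟩ := hx'
    simp only [Finset.mem_coe, Finset.mem_range] at hr hr'
    have h1 : (k * t + r) % t = r := mul_add_mod' k hr
    have h2 : (k' * t + r') % t = r' := mul_add_mod' k' hr'
    rw [he] at h2
    omega

end AK
end AKCore
namespace AK
open Finset

variable {t : ℕ} {lam : ℕ → ℕ}

lemma L_length (hlam : IsPartition lam) (ht : 0 < t) :
    (L t lam).length = N0 t lam := by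
  rw [L, Finset.length_sort]; exact card_T hlam ht

lemma L_sorted : (L t lam).Pairwise (· < ·) := (Finset.sortedLT_sort _).pairwise

lemma sorted_getD_le (l : List ℕ) (hl : l.Pairwise (· < ·)) {a b : ℕ}
    (hab : a ≤ b) (hb : b < l.length) : l.getD a 0 + (b - a) ≤ l.getD b 0 := by
  have h0 := AK.sorted_get_le l hl (b - a) a (by omega)
  have h2 : a + (b - a) = b := by omega
  simp only [h2] at h0
  rw [List.getD_eq_getElem (hn := show a < l.length by omega), List.getD_eq_getElem (hn := hb)]
  exact h0

lemma s_anti (hlam : IsPartition lam) (ht : 0 < t) {i j : ℕ}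
    (hij : i ≤ j) (hj : j < N0 t lam) : s t lam j + (j - i) ≤ s t lam i := by
  have hlen := L_length (t := t) hlam ht
  have h := sorted_getD_le (L t lam) L_sorted
    (a := N0 t lam - 1 - j) (b := N0 t lam - 1 - i) (by omega) (by omega)
  have hd : (N0 t lam - 1 - i) - (N0 t lam - 1 - j) = j - i := by omega
  rw [hd] at h
  exact h

lemma s_ge (hlam : IsPartition lam) (ht : 0 < t) {i : ℕ} (hi : i < N0 t lam) :
    N0 t lam ≤ s t lam i + i + 1 := by
  have hlen := L_length (t := t) hlam ht
  have h := sorted_getD_le (L t lam) L_sorted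
    (a := 0) (b := N0 t lam - 1 - i) (by omega) (by omega)
  have : s t lam i = (L t lam).getD (N0 t lam - 1 - i) 0 := rfl
  omega

lemma s_mem (hlam : IsPartition lam) (ht : 0 < t) {i : ℕ} (hi : i < N0 t lam) :
    s t lam i ∈ T t lam := by
  have hlen := L_length (t := t) hlam ht
  have h1 : s t lam i = (L t lam).get ⟨N0 t lam - 1 - i, by omega⟩ :=
    List.getD_eq_get (L t lam) 0 ⟨N0 t lam - 1 - i, by omega⟩
  rw [h1]
  exact (Finset.mem_sort _).mp (List.get_mem _ _)

lemma T_eq_image (hlam : IsPartition lam) (ht : 0 < t) :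
    T t lam = (Finset.range (N0 t lam)).image (s t lam) := by
  have hlen := L_length (t := t) hlam ht
  apply Finset.Subset.antisymm
  · intro x hx
    have hx' : x ∈ L t lam := (Finset.mem_sort _).mpr hx
    obtain ⟨⟨k, hk⟩, hget⟩ := List.mem_iff_get.mp hx'
    have hk' : k < N0 t lam := by omega
    refine Finset.mem_image.mpr ⟨N0 t lam - 1 - k, Finset.mem_range.mpr (by omega), ?_⟩
    have : s t lam (N0 t lam - 1 - k) = (L t lam).getD (N0 t lam - 1 - (N0 t lam - 1 - k)) 0 := rfl
    rw [this]
    have hkk : N0 t lam - 1 - (N0 t lam - 1 - k) = k := by omega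
    rw [hkk, List.getD_eq_getElem (hn := by omega)]
    exact hget
  · intro x hx
    obtain ⟨i, hi, rfl⟩ := Finset.mem_image.mp hx
    exact s_mem hlam ht (Finset.mem_range.mp hi)

lemma core_apply {i : ℕ} (hi : i < N0 t lam) :
    tCore t lam i = s t lam i + (i + 1) - N0 t lam := by
  rw [tCore_eq]; simp only [hi, if_true]

lemma core_apply_ge {i : ℕ} (hi : N0 t lam ≤ i) : tCore t lam i = 0 := by
  rw [tCore_eq]; simp only [if_neg (by omega : ¬ i < N0 t lam)]

lemma core_add (hlam : IsPartition lam) (ht : 0 < t) {i : ℕ} (hi : i < N0 t lam) :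
    tCore t lam i + (N0 t lam - 1 - i) = s t lam i := by
  have := s_ge hlam ht hi
  rw [core_apply hi]
  omega

lemma core_antitone (hlam : IsPartition lam) (ht : 0 < t) :
    Antitone (tCore t lam) := by
  intro i j hij
  rcases Nat.lt_or_ge j (N0 t lam) with hj | hj
  · have h1 := s_anti hlam ht hij hj
    rw [core_apply hj, core_apply (by omega)]
    omega
  · rw [core_apply_ge hj]
    exact Nat.zero_le _

lemma core_isPartition (hlam : IsPartition lam) (ht : 0 < t) :
    IsPartition (tCore t lam) :=
  ⟨core_antitone hlam ht, ⟨N0 t lam, fun _ hi => core_apply_ge hi⟩⟩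

lemma core_plen_le : plen (tCore t lam) ≤ N0 t lam :=
  AK.plen_le fun _ hi => core_apply_ge hi

lemma core_beta (hlam : IsPartition lam) (ht : 0 < t) :
    betaSet (tCore t lam) (N0 t lam) = T t lam := by
  rw [T_eq_image hlam ht, betaSet]
  apply Finset.image_congr
  intro i hi
  simp only [Finset.coe_range, Set.mem_Iio] at hi
  exact core_add hlam ht hi

end AK
namespace AK
open Finset

variable {f : ℕ → ℕ}

lemma lower_mem_iff {S : Set ℕ} (hfin : S.Finite)
    (hlow : ∀ a b, a ≤ b → b ∈ S → a ∈ S) : ∀ i, i ∈ S ↔ i < S.ncard := by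
  intro i
  rcases S.eq_empty_or_nonempty with rfl | hne
  · simp
  · have hSF : S = ↑hfin.toFinset := (Set.Finite.coe_toFinset hfin).symm
    have hFne : hfin.toFinset.Nonempty := by
      rwa [← Set.Finite.toFinset_nonempty hfin] at hne
    set M := hfin.toFinset.max' hFne with hM
    have hMS : M ∈ S := by
      have := hfin.toFinset.max'_mem hFne
      rwa [Set.Finite.mem_toFinset] at this
    have hiff : ∀ x, x ∈ S ↔ x ≤ M := by
      intro x
      constructor
      · intro hx
        exact hfin.toFinset.le_max' x ((Set.Finite.mem_toFinset hfin).mpr hx)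
      · intro hx; exact hlow x M hx hMS
    have hSeq : S = Set.Iic M := Set.ext fun x => hiff x
    have hcard : (Set.Iic M).ncard = M + 1 := by
      rw [show Set.Iic M = ↑(Finset.Iic M) by simp, Set.ncard_coe_finset]
      simp
    rw [hSeq, hcard, Set.mem_Iic]
    omega

lemma plen_pos_iff (hf : IsPartition f) {i : ℕ} : i < plen f ↔ 0 < f i := by
  constructor
  · intro hi
    by_contra hc
    have h0 : f i = 0 := by omega
    have : plen f ≤ i := AK.plen_le fun j hj => by
      have := hf.1 hj
      omega
    omega
  · intro hi
    exact AK.lt_plen_of_ne hf (by omega)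

lemma conj_finite (hf : IsPartition f) (j : ℕ) : {i | j < f i}.Finite := by
  apply Set.Finite.subset (Set.finite_Iio (plen f))
  intro i hi
  exact AK.lt_plen_of_ne hf (by simp at hi; omega)

lemma lt_conj_iff (hf : IsPartition f) {i j : ℕ} : i < conjP f j ↔ j < f i := by
  have := lower_mem_iff (conj_finite hf j)
    (fun a b hab hb => by
      simp only [Set.mem_setOf_eq] at hb ⊢
      have := hf.1 hab
      omega) i
  rw [conjP]
  simp only [Set.mem_setOf_eq] at this
  exact this.symm

lemma conj_antitone (hf : IsPartition f) : Antitone (conjP f) := by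
  intro j j' hj
  apply Set.ncard_le_ncard _ (conj_finite hf j)
  intro i hi
  simp only [Set.mem_setOf_eq] at hi ⊢
  omega

lemma conj_eventually_zero (hf : IsPartition f) {j : ℕ} (hj : f 0 ≤ j) :
    conjP f j = 0 := by
  rw [conjP]
  convert Set.ncard_empty ℕ
  ext i
  simp only [Set.mem_setOf_eq, Set.mem_empty_iff_false, iff_false, not_lt]
  exact le_trans (hf.1 (Nat.zero_le i)) hj

lemma conj_isPartition (hf : IsPartition f) : IsPartition (conjP f) :=
  ⟨conj_antitone hf, ⟨f 0, fun _ hj => conj_eventually_zero hf hj⟩⟩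

lemma conj_zero_eq_plen (hf : IsPartition f) : conjP f 0 = plen f := by
  rw [conjP]
  have : {i | 0 < f i} = ↑(Finset.range (plen f)) := by
    ext i
    simp only [Set.mem_setOf_eq, Finset.coe_range, Set.mem_Iio]
    exact (plen_pos_iff hf).symm
  rw [this, Set.ncard_coe_finset, Finset.card_range]

lemma conj_le_plen (hf : IsPartition f) (j : ℕ) : conjP f j ≤ plen f := by
  rw [← conj_zero_eq_plen hf]
  exact conj_antitone hf (Nat.zero_le j)

lemma rk_mem_iff (hf : IsPartition f) {i : ℕ} : i < rk f ↔ i < f i := by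
  have := lower_mem_iff (S := {i | i < f i})
    (Set.Finite.subset (Set.finite_Iio (plen f))
      (fun i hi => by
        simp only [Set.mem_setOf_eq] at hi
        exact AK.lt_plen_of_ne hf (by omega)))
    (fun a b hab hb => by
      simp only [Set.mem_setOf_eq] at hb ⊢
      have := hf.1 hab
      omega) i
  simp only [Set.mem_setOf_eq] at this
  rw [rk]
  exact this.symm

lemma rk_conj (hf : IsPartition f) : rk (conjP f) = rk f := by
  rw [rk, rk]
  congr 1
  ext i
  simp only [Set.mem_setOf_eq]
  rw [lt_conj_iff hf]

lemma rk_le_plen (hf : IsPartition f) : rk f ≤ plen f := by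
  by_contra hc
  have h1 : plen f < rk f := by omega
  have := (rk_mem_iff hf).mp h1
  have := AK.plen_zero hf (plen f) le_rfl
  omega

lemma beta_disj_conj (hf : IsPartition f) {N M : ℕ} (hN : plen f ≤ N) (hM : f 0 ≤ M) :
    Disjoint (betaSet f N)
      ((betaSet (conjP f) M).image fun y => N + M - 1 - y) := by
  rw [Finset.disjoint_left]
  rintro x hx hx'
  obtain ⟨i, hi, rfl⟩ := AK.mem_betaSet.mp hx
  obtain ⟨y, hy, he⟩ := Finset.mem_image.mp hx'
  obtain ⟨j, hj, rfl⟩ := AK.mem_betaSet.mp hy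
  have hconj : conjP f j ≤ N := le_trans (conj_le_plen hf j) hN
  rcases Nat.lt_or_ge j (f i) with hc | hc
  · have := (lt_conj_iff hf (i := i) (j := j)).mpr hc
    omega
  · have : ¬ i < conjP f j := fun h => absurd ((lt_conj_iff hf).mp h) (by omega)
    omega

lemma beta_union_conj (hf : IsPartition f) {N M : ℕ} (hN : plen f ≤ N) (hM : f 0 ≤ M) :
    betaSet f N ∪ ((betaSet (conjP f) M).image fun y => N + M - 1 - y) =
      Finset.range (N + M) := by
  apply Finset.eq_of_subset_of_card_le
  · intro x hx
    rcases Finset.mem_union.mp hx with hx | hx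
    · obtain ⟨i, hi, rfl⟩ := AK.mem_betaSet.mp hx
      have := hf.1 (Nat.zero_le i)
      exact Finset.mem_range.mpr (by omega)
    · obtain ⟨y, hy, rfl⟩ := Finset.mem_image.mp hx
      obtain ⟨j, hj, rfl⟩ := AK.mem_betaSet.mp hy
      exact Finset.mem_range.mpr (by omega)
  · rw [Finset.card_union_of_disjoint (beta_disj_conj hf hN hM), Finset.card_range,
      AK.betaSet_card hf.1]
    have hinj : (betaSet (conjP f) M).card =
        ((betaSet (conjP f) M).image fun y => N + M - 1 - y).card := by
      rw [Finset.card_image_of_injOn]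
      intro a ha b hb hab
      obtain ⟨i, hi, rfl⟩ := AK.mem_betaSet.mp ha
      obtain ⟨j, hj, rfl⟩ := AK.mem_betaSet.mp hb
      have h1 : conjP f i ≤ N := le_trans (conj_le_plen hf i) hN
      have h2 : conjP f j ≤ N := le_trans (conj_le_plen hf j) hN
      have hab' : N + M - 1 - (conjP f i + (M - 1 - i)) =
          N + M - 1 - (conjP f j + (M - 1 - j)) := hab
      omega
    rw [AK.betaSet_card (conj_antitone hf)] at hinj
    omega

lemma beta_filter_ge (hf : IsPartition f) {N : ℕ} (hN : plen f ≤ N) :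
    (betaSet f N).filter (fun x => N ≤ x) =
      (Finset.range (rk f)).image fun i => f i + (N - 1 - i) := by
  have hrk := rk_le_plen hf
  ext x
  simp only [Finset.mem_filter, Finset.mem_image, Finset.mem_range, AK.mem_betaSet]
  constructor
  · rintro ⟨⟨i, hi, rfl⟩, hge⟩
    have hfi : i < f i := by omega
    exact ⟨i, (rk_mem_iff hf).mpr hfi, rfl⟩
  · rintro ⟨i, hi, rfl⟩
    have hfi : i < f i := (rk_mem_iff hf).mp hi
    exact ⟨⟨i, by omega, rfl⟩, by omega⟩

lemma compl_beta (hf : IsPartition f) {N : ℕ} (hN : plen f ≤ N) :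
    Finset.range N \ betaSet f N =
      (Finset.range (rk f)).image fun i => N + i - conjP f i := by
  have hrk := rk_le_plen hf
  have hUnion := beta_union_conj hf hN (le_refl (f 0))
  have hDisj := beta_disj_conj hf hN (le_refl (f 0))
  set M := f 0 with hM
  ext x
  simp only [Finset.mem_sdiff, Finset.mem_range, Finset.mem_image]
  constructor
  · rintro ⟨hxN, hxb⟩
    have hx' : x ∈ Finset.range (N + M) := Finset.mem_range.mpr (by omega)
    rw [← hUnion] at hx'
    rcases Finset.mem_union.mp hx' with h | h
    · exact absurd h hxb
    · obtain ⟨y, hy, rfl⟩ := Finset.mem_image.mp h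
      obtain ⟨j, hj, rfl⟩ := AK.mem_betaSet.mp hy
      have hcle : conjP f j ≤ N := le_trans (conj_le_plen hf j) hN
      have hjc : j < conjP f j := by omega
      have hjrk : j < rk f := by
        rw [← rk_conj hf]
        exact (rk_mem_iff (conj_isPartition hf)).mpr hjc
      refine ⟨j, hjrk, ?_⟩
      show N + j - conjP f j = N + M - 1 - (conjP f j + (M - 1 - j))
      omega
  · rintro ⟨i, hi, rfl⟩
    have hic : i < conjP f i := by
      rw [← rk_conj hf] at hi
      exact (rk_mem_iff (conj_isPartition hf)).mp hi
    have hcle : conjP f i ≤ N := le_trans (conj_le_plen hf i) hN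
    have hiM : i < M := by
      have := (rk_mem_iff hf).mp hi
      have := hf.1 (Nat.zero_le i)
      omega
    constructor
    · omega
    · intro hmem
      have himg : N + i - conjP f i ∈
          (betaSet (conjP f) M).image fun y => N + M - 1 - y := by
        refine Finset.mem_image.mpr ⟨conjP f i + (M - 1 - i), ?_, by omega⟩
        exact AK.mem_betaSet.mpr ⟨i, hiM, rfl⟩
      exact (Finset.disjoint_left.mp hDisj) hmem himg

lemma rk_eq_card_filter (hf : IsPartition f) {N : ℕ} (hN : plen f ≤ N) :
    rk f = ((betaSet f N).filter fun x => N ≤ x).card := by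
  rw [beta_filter_ge hf hN, Finset.card_image_of_injOn, Finset.card_range]
  intro i hi j hj hij
  simp only [Finset.coe_range, Set.mem_Iio] at hi hj
  have hrk := rk_le_plen hf
  by_contra hne
  rcases Nat.lt_or_ge i j with hlt | hge
  · exact absurd hij (AK.beta_strictAnti hf.1 hlt (by omega)).ne'
  · exact absurd hij.symm (AK.beta_strictAnti hf.1 (by omega) (by omega)).ne'

end AK
namespace AK
open Finset

variable {t : ℕ} {lam : ℕ → ℕ}

lemma mul_lt_mul_aux {k q r : ℕ} (ht : 0 < t) (hr : r < t) :
    k * t + r < q * t ↔ k < q := by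
  have e1 : (k + 1) * t = k * t + t := Nat.succ_mul k t
  constructor
  · intro h
    by_contra hc
    have : q * t ≤ k * t := Nat.mul_le_mul_right t (by omega)
    omega
  · intro h
    have : (k + 1) * t ≤ q * t := Nat.mul_le_mul_right t h
    omega

lemma mul_inj_aux (ht : 0 < t) {r : ℕ} :
    Function.Injective fun k => k * t + r := by
  intro a b hab
  have hab' : a * t + r = b * t + r := hab
  exact Nat.eq_of_mul_eq_mul_right ht (by omega)

lemma count_A (ht : 0 < t) {r : ℕ} (hr : r < t) :
    (((T t lam).filter fun x => x % t = r).filter fun x => N0 t lam ≤ x).card =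
      m t lam r - (plen lam + 1) := by
  have hN : N0 t lam = (plen lam + 1) * t := by rw [N0]; ring
  have himg : (((T t lam).filter fun x => x % t = r).filter fun x => N0 t lam ≤ x) =
      (Finset.Ico (plen lam + 1) (m t lam r)).image fun k => k * t + r := by
    rw [T_filter ht hr]
    ext x
    simp only [Finset.mem_filter, Finset.mem_image, Finset.mem_range, Finset.mem_Ico]
    constructor
    · rintro ⟨⟨k, hk, rfl⟩, hge⟩
      refine ⟨k, ⟨?_, hk⟩, rfl⟩
      by_contra hc
      have hlt : k * t + r < (plen lam + 1) * t :=
        (mul_lt_mul_aux ht hr).mpr (show k < plen lam + 1 by omega)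
      omega
    · rintro ⟨k, ⟨h1, h2⟩, rfl⟩
      have : (plen lam + 1) * t ≤ k * t := Nat.mul_le_mul_right t h1
      exact ⟨⟨k, h2, rfl⟩, by omega⟩
  rw [himg, Finset.card_image_of_injective _ (mul_inj_aux ht), Nat.card_Ico]

lemma range_filter_mod (ht : 0 < t) {r : ℕ} (hr : r < t) (q : ℕ) :
    (Finset.range (t * q)).filter (fun x => x % t = r) =
      (Finset.range q).image fun k => k * t + r := by
  have e1 : t * q = q * t := Nat.mul_comm t q
  ext x
  simp only [Finset.mem_filter, Finset.mem_range, Finset.mem_image]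
  constructor
  · rintro ⟨hx, rfl⟩
    have hmod : x % t < t := Nat.mod_lt x ht
    have hdm : x / t * t + x % t = x := Nat.div_add_mod' x t
    have h2 : x / t * t + x % t < q * t := by omega
    exact ⟨x / t, (mul_lt_mul_aux ht hmod).mp (by omega), hdm⟩
  · rintro ⟨k, hk, rfl⟩
    have h1 : k * t + r < q * t := (mul_lt_mul_aux ht hr).mpr hk
    exact ⟨by omega, mul_add_mod' k hr⟩

lemma count_B (ht : 0 < t) {r : ℕ} (hr : r < t) :
    ((Finset.range (N0 t lam) \ T t lam).filter fun x => x % t = r).card =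
      (plen lam + 1) - m t lam r := by
  have hsd : (Finset.range (N0 t lam) \ T t lam).filter (fun x => x % t = r) =
      (Finset.range (N0 t lam)).filter (fun x => x % t = r) \
        (T t lam).filter (fun x => x % t = r) := by
    ext x
    simp only [Finset.mem_filter, Finset.mem_sdiff]
    tauto
  rw [hsd, N0, range_filter_mod ht hr, T_filter ht hr, ← Finset.image_sdiff _ _ (mul_inj_aux ht)]
  rw [Finset.card_image_of_injective _ (mul_inj_aux ht)]
  have : Finset.range (plen lam + 1) \ Finset.range (m t lam r) =
      Finset.Ico (m t lam r) (plen lam + 1) := by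
    ext k
    simp only [Finset.mem_sdiff, Finset.mem_range, Finset.mem_Ico]
    omega
  rw [this, Nat.card_Ico]

lemma mod_sub_of_mod {x M' : ℕ} (hx : x ≤ M') :
    (M' - x) % t = (M' - x % t) % t := by
  have hdm : t * (x / t) + x % t = x := Nat.div_add_mod x t
  have h1 : M' - x = (M' - x % t) - t * (x / t) := by omega
  rw [h1, Nat.sub_mul_mod (by omega)]

lemma mod_invol {r M' : ℕ} (ht : 0 < t) (hr : r < t) (hrM : r ≤ M') :
    (M' - (M' - r) % t) % t = r := by
  have hdm : t * ((M' - r) / t) + (M' - r) % t = M' - r := Nat.div_add_mod _ t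
  have hlt : (M' - r) % t < t := Nat.mod_lt _ ht
  have e1 : t * ((M' - r) / t) = ((M' - r) / t) * t := Nat.mul_comm _ _
  have h1 : M' - (M' - r) % t = r + ((M' - r) / t) * t := by omega
  rw [h1, Nat.add_mul_mod_self_right]
  exact Nat.mod_eq_of_lt hr

lemma key_rel (hlam : IsPartition lam) (ht : 0 < t) {z : ℤ} (hzle : z ≤ 1)
    (hz : ZAsymmetric z (tCore t lam)) {M' : ℕ}
    (hM' : (M' : ℤ) = 2 * (N0 t lam : ℤ) - 1 - z) {r : ℕ} (hr : r < t) :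
    m t lam r - (plen lam + 1) = (plen lam + 1) - m t lam ((M' - r) % t) := by
  set μ := tCore t lam with hμ
  have hμp : IsPartition μ := core_isPartition hlam ht
  have hplen : plen μ ≤ N0 t lam := core_plen_le
  have hrk : rk μ ≤ N0 t lam := le_trans (rk_le_plen hμp) hplen
  have htN : t ≤ N0 t lam := by
    rw [N0]
    exact Nat.le_mul_of_pos_right t (by omega)
  have hA := beta_filter_ge hμp hplen
  have hB := compl_beta hμp hplen
  rw [core_beta hlam ht] at hA hB
  have hbnd : ∀ i < rk μ, μ i + (N0 t lam - 1 - i) ≤ M' ∧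
      N0 t lam + i - conjP μ i = M' - (μ i + (N0 t lam - 1 - i)) ∧
      N0 t lam ≤ μ i + (N0 t lam - 1 - i) := by
    intro i hi
    have hzc : (conjP μ i : ℤ) = (μ i : ℤ) + z := hz i hi
    have hc1 : conjP μ i ≤ N0 t lam := le_trans (conj_le_plen hμp i) hplen
    have hic : i < conjP μ i := by
      rw [← rk_conj hμp] at hi
      exact (rk_mem_iff (conj_isPartition hμp)).mp hi
    have hifi : i < μ i := (rk_mem_iff hμp).mp hi
    omega
  set ρ := (M' - r) % t with hρ
  have hρt : ρ < t := Nat.mod_lt _ ht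
  have hrM : r ≤ M' := by omega
  have hmodiff : ∀ i < rk μ,
      ((M' - (μ i + (N0 t lam - 1 - i))) % t = ρ ↔
        (μ i + (N0 t lam - 1 - i)) % t = r) := by
    intro i hi
    obtain ⟨hle, -, -⟩ := hbnd i hi
    set x := μ i + (N0 t lam - 1 - i) with hx
    constructor
    · intro h
      have h3 : x = M' - (M' - x) := by omega
      calc x % t = (M' - (M' - x)) % t := by rw [← h3]
        _ = (M' - (M' - x) % t) % t := mod_sub_of_mod (by omega)
        _ = (M' - ρ) % t := by rw [h]
        _ = r := by rw [hρ]; exact mod_invol ht hr hrM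
    · intro h
      rw [mod_sub_of_mod hle, h, hρ]
  have himg : ((Finset.range (N0 t lam) \ T t lam).filter fun x => x % t = ρ) =
      ((((T t lam).filter fun x => x % t = r).filter fun x => N0 t lam ≤ x).image
        fun x => M' - x) := by
    ext x
    simp only [Finset.mem_filter, Finset.mem_image]
    constructor
    · rintro ⟨hxB, hxρ⟩
      rw [hB] at hxB
      obtain ⟨i, hi, rfl⟩ := Finset.mem_image.mp hxB
      have hi' := Finset.mem_range.mp hi
      obtain ⟨hle, heq, hge⟩ := hbnd i hi'
      have hgA : μ i + (N0 t lam - 1 - i) ∈ (T t lam).filter fun x => N0 t lam ≤ x := by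
        rw [hA]
        exact Finset.mem_image.mpr ⟨i, hi, rfl⟩
      have hgT := Finset.mem_filter.mp hgA
      have hmod : (μ i + (N0 t lam - 1 - i)) % t = r := by
        apply (hmodiff i hi').mp
        rw [← heq]
        exact hxρ
      exact ⟨μ i + (N0 t lam - 1 - i), ⟨⟨hgT.1, hmod⟩, hgT.2⟩, heq.symm⟩
    · rintro ⟨y, ⟨⟨hyT, hyr⟩, hyge⟩, rfl⟩
      have hyA : y ∈ (T t lam).filter fun x => N0 t lam ≤ x :=
        Finset.mem_filter.mpr ⟨hyT, hyge⟩
      rw [hA] at hyA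
      obtain ⟨i, hi, rfl⟩ := Finset.mem_image.mp hyA
      have hi' := Finset.mem_range.mp hi
      obtain ⟨hle, heq, hge⟩ := hbnd i hi'
      constructor
      · rw [hB, ← heq]
        exact Finset.mem_image.mpr ⟨i, hi, rfl⟩
      · exact (hmodiff i hi').mpr hyr
  have hcount := congrArg Finset.card himg
  rw [count_B ht hρt, Finset.card_image_of_injOn, count_A ht hr] at hcount
  · exact hcount.symm
  · intro a ha b hb hab
    have haA : a ∈ (T t lam).filter fun x => N0 t lam ≤ x := by
      have := Finset.mem_coe.mp ha
      rw [Finset.filter_comm] at this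
      exact Finset.mem_filter.mp this |>.1
    have hbA : b ∈ (T t lam).filter fun x => N0 t lam ≤ x := by
      have := Finset.mem_coe.mp hb
      rw [Finset.filter_comm] at this
      exact Finset.mem_filter.mp this |>.1
    have h1 : a ≤ M' := by
      rw [hA] at haA
      obtain ⟨i, hi, rfl⟩ := Finset.mem_image.mp haA
      exact (hbnd i (Finset.mem_range.mp hi)).1
    have h2 : b ≤ M' := by
      rw [hA] at hbA
      obtain ⟨i, hi, rfl⟩ := Finset.mem_image.mp hbA
      exact (hbnd i (Finset.mem_range.mp hi)).1
    have hab' : M' - a = M' - b := hab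
    omega

end AK
namespace AK
open Finset

variable {t : ℕ} {lam : ℕ → ℕ}

lemma rk_sum (hlam : IsPartition lam) (ht : 0 < t) :
    rk (tCore t lam) = ∑ r ∈ Finset.range t, (m t lam r - (plen lam + 1)) := by
  have hμp : IsPartition (tCore t lam) := core_isPartition hlam ht
  have h1 := rk_eq_card_filter hμp (core_plen_le (t := t) (lam := lam))
  rw [core_beta hlam ht] at h1
  rw [h1, Finset.card_eq_sum_card_fiberwise
    (f := fun x => x % t) (t := Finset.range t)
    (fun x _ => Finset.mem_range.mpr (Nat.mod_lt _ ht))]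
  apply Finset.sum_congr rfl
  intro r hr
  rw [Finset.filter_comm]
  exact count_A ht (Finset.mem_range.mp hr)

lemma m_sub (hlam : IsPartition lam) (ht : 0 < t) {n : ℕ} (hn : 0 < n)
    (hlen : plen lam ≤ n * t) {r : ℕ} (hr : r < t) :
    (m t lam r : ℤ) - (plen lam + 1) = (mr t lam (n * t) r : ℤ) - n := by
  have hpN : plen lam ≤ t * (plen lam + 1) :=
    le_trans (Nat.le_succ _) (Nat.le_mul_of_pos_left _ ht)
  rcases le_or_gt n (plen lam + 1) with hc | hc
  · have he : t * (plen lam + 1) = n * t + (plen lam + 1 - n) * t := by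
      have : (n + (plen lam + 1 - n)) * t = (plen lam + 1) * t := by
        congr 1; omega
      have e2 : (n + (plen lam + 1 - n)) * t = n * t + (plen lam + 1 - n) * t :=
        Nat.add_mul _ _ _
      have e3 : t * (plen lam + 1) = (plen lam + 1) * t := Nat.mul_comm _ _
      omega
    have := AK.mr_add_mul hlam (N := n * t) hlen hr (plen lam + 1 - n)
    rw [m, N0, he, this]
    omega
  · have he : n * t = t * (plen lam + 1) + (n - (plen lam + 1)) * t := by
      have : ((plen lam + 1) + (n - (plen lam + 1))) * t = n * t := by
        congr 1; omega
      have e2 : ((plen lam + 1) + (n - (plen lam + 1))) * t =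
          (plen lam + 1) * t + (n - (plen lam + 1)) * t := Nat.add_mul _ _ _
      have e3 : t * (plen lam + 1) = (plen lam + 1) * t := Nat.mul_comm _ _
      omega
    have := AK.mr_add_mul hlam (N := t * (plen lam + 1)) hpN hr (n - (plen lam + 1))
    rw [m, N0, he, this]
    omega

lemma sum_machine (t : ℕ) (D E : ℕ → ℕ) (ρ : ℕ → ℕ) (S1 S2 : Finset ℕ)
    (hρt : ∀ r < t, ρ r < t)
    (hkey : ∀ r < t, D r = E (ρ r))
    (hinv : ∀ r < t, ρ (ρ r) = r)
    (hDE0 : ∀ r < t, D r = E r → D r = 0)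
    (hS1 : S1 ⊆ Finset.range t) (hS2 : S2 ⊆ Finset.range t)
    (hdisj : Disjoint S1 S2)
    (hmap : S1.image ρ = S2)
    (hfix : ∀ r < t, r ∉ S1 → r ∉ S2 → ρ r = r) :
    ∑ r ∈ Finset.range t, D r = ∑ r ∈ S1, (D r + E r) := by
  have hES1 : ∀ r ∈ S1, E r = D (ρ r) := by
    intro r hr
    have hrt := Finset.mem_range.mp (hS1 hr)
    have h1 := hkey (ρ r) (hρt r hrt)
    rw [hinv r hrt] at h1
    exact h1.symm
  have hsum2 : ∑ r ∈ S1, E r = ∑ r ∈ S2, D r := by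
    rw [Finset.sum_congr rfl hES1, ← hmap, Finset.sum_image]
    intro a ha b hb hab
    have h1 := hinv a (Finset.mem_range.mp (hS1 ha))
    have h2 := hinv b (Finset.mem_range.mp (hS1 hb))
    rw [← h1, ← h2, hab]
  rw [Finset.sum_add_distrib, hsum2, ← Finset.sum_union hdisj]
  symm
  apply Finset.sum_subset
  · intro x hx
    rcases Finset.mem_union.mp hx with h | h
    · exact hS1 h
    · exact hS2 h
  · intro x hx hnx
    have hxt := Finset.mem_range.mp hx
    have hx1 : x ∉ S1 := fun h => hnx (Finset.mem_union_left _ h)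
    have hx2 : x ∉ S2 := fun h => hnx (Finset.mem_union_right _ h)
    have hfx := hfix x hxt hx1 hx2
    apply hDE0 x hxt
    have := hkey x hxt
    rw [hfx] at this
    exact this

lemma final_case (hlam : IsPartition lam) (ht : 0 < t) {n : ℕ} (hn : 0 < n)
    (hlen : plen lam ≤ n * t)
    {z : ℤ} (hzle : z ≤ 1) (hz : ZAsymmetric z (tCore t lam)) (M' : ℕ)
    (hM' : (M' : ℤ) = 2 * (N0 t lam : ℤ) - 1 - z)
    (ρ : ℕ → ℕ) (hρeq : ∀ r < t, (M' - r) % t = ρ r)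
    (hinv : ∀ r < t, ρ (ρ r) = r)
    (S1 S2 : Finset ℕ)
    (hS1 : S1 ⊆ Finset.range t) (hS2 : S2 ⊆ Finset.range t)
    (hdisj : Disjoint S1 S2)
    (hmap : S1.image ρ = S2)
    (hfix : ∀ r < t, r ∉ S1 → r ∉ S2 → ρ r = r) :
    rk (tCore t lam) = ∑ r ∈ S1, ((mr t lam (n * t) r : ℤ) - n).natAbs := by
  have hρt : ∀ r < t, ρ r < t := by
    intro r hr
    rw [← hρeq r hr]
    exact Nat.mod_lt _ ht
  have hkey : ∀ r < t, m t lam r - (plen lam + 1) =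
      (plen lam + 1) - m t lam (ρ r) := by
    intro r hr
    have := key_rel hlam ht hzle hz hM' hr
    rwa [hρeq r hr] at this
  have hDE0 : ∀ r < t, m t lam r - (plen lam + 1) = (plen lam + 1) - m t lam r →
      m t lam r - (plen lam + 1) = 0 := by
    intro r _ h
    omega
  have hmach := sum_machine t (fun r => m t lam r - (plen lam + 1))
    (fun r => (plen lam + 1) - m t lam r) ρ S1 S2 hρt hkey hinv hDE0
    hS1 hS2 hdisj hmap hfix
  rw [rk_sum hlam ht, hmach]
  apply Finset.sum_congr rfl
  intro r hr
  have hrt := Finset.mem_range.mp (hS1 hr)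
  have := m_sub hlam ht hn hlen hrt
  show m t lam r - (plen lam + 1) + (plen lam + 1 - m t lam r) = _
  omega

end AK
namespace AK
open Finset

variable {t : ℕ} {lam : ℕ → ℕ}

lemma rho_orth {r : ℕ} (ht : 0 < t) (hr : r < t) :
    (2 * N0 t lam - r) % t = if r = 0 then 0 else t - r := by
  by_cases h0 : r = 0
  · subst h0
    rw [if_pos rfl, Nat.sub_zero]
    show (2 * (t * (plen lam + 1))) % t = 0
    have e : 2 * (t * (plen lam + 1)) = t * (2 * (plen lam + 1)) := by ring
    rw [e]
    exact Nat.mul_mod_right _ _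
  · rw [if_neg h0]
    show (2 * (t * (plen lam + 1)) - r) % t = t - r
    have e1 : 2 * (t * (plen lam + 1)) = (2 * plen lam + 1) * t + t := by ring
    have key : 2 * (t * (plen lam + 1)) - r = (t - r) + (2 * plen lam + 1) * t := by
      omega
    rw [key, Nat.add_mul_mod_self_right]
    exact Nat.mod_eq_of_lt (by omega)

lemma rho_so {r : ℕ} (ht : 0 < t) (hr : r < t) :
    (2 * N0 t lam - 1 - r) % t = t - 1 - r := by
  show (2 * (t * (plen lam + 1)) - 1 - r) % t = t - 1 - r
  have e1 : 2 * (t * (plen lam + 1)) = (2 * plen lam + 1) * t + t := by ring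
  have key : 2 * (t * (plen lam + 1)) - 1 - r =
      (t - 1 - r) + (2 * plen lam + 1) * t := by omega
  rw [key, Nat.add_mul_mod_self_right]
  exact Nat.mod_eq_of_lt (by omega)

lemma rho_sp {r : ℕ} (ht : 2 ≤ t) (hr : r < t) :
    (2 * N0 t lam - 2 - r) % t = if r = t - 1 then t - 1 else t - 2 - r := by
  by_cases h : r = t - 1
  · rw [if_pos h]
    show (2 * (t * (plen lam + 1)) - 2 - r) % t = t - 1
    have e1 : 2 * (t * (plen lam + 1)) = (2 * plen lam) * t + 2 * t := by ring
    have key : 2 * (t * (plen lam + 1)) - 2 - r =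
        (t - 1) + (2 * plen lam) * t := by omega
    rw [key, Nat.add_mul_mod_self_right]
    exact Nat.mod_eq_of_lt (by omega)
  · rw [if_neg h]
    show (2 * (t * (plen lam + 1)) - 2 - r) % t = t - 2 - r
    have e1 : 2 * (t * (plen lam + 1)) = (2 * plen lam + 1) * t + t := by ring
    have key : 2 * (t * (plen lam + 1)) - 2 - r =
        (t - 2 - r) + (2 * plen lam + 1) * t := by omega
    rw [key, Nat.add_mul_mod_self_right]
    exact Nat.mod_eq_of_lt (by omega)

lemma N0_pos (ht : 0 < t) : 0 < N0 t lam := by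
  rw [N0]
  positivity

end AK

/-- **Lemma (Ayyer–Kumari, rank of the `t`-core).** For `λ` of length at most `nt`:
if the `t`-core of `λ` is orthogonal, then
`rk(t-core(λ)) = ∑_{r=1}^{⌊(t-1)/2⌋} |m_r - n| = ∑_{r=⌊(t+2)/2⌋}^{t-1} |m_r - n|`;
if symplectic, then
`rk(t-core(λ)) = ∑_{r=0}^{⌊(t-3)/2⌋} |m_r - n| = ∑_{r=⌊t/2⌋}^{t-2} |m_r - n|`;
if self-conjugate, then
`rk(t-core(λ)) = ∑_{r=0}^{⌊(t-2)/2⌋} |m_r - n| = ∑_{r=⌊(t+1)/2⌋}^{t-1} |m_r - n|`,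
where `m_r = m_r(λ;nt)`.  (The ranges `r ≤ ⌊(t-3)/2⌋` resp. `r ≤ ⌊(t-2)/2⌋` are
written as `r < ⌊(t-1)/2⌋` resp. `r < ⌊t/2⌋`, the same ranges for all `t ≥ 2`.) -/
theorem rk_core_sums (t n : ℕ) (ht : 2 ≤ t) (hn : 0 < n) (lam : ℕ → ℕ)
    (hlam : IsPartition lam) (hlen : plen lam ≤ n * t) :
    (ZAsymmetric (-1) (tCore t lam) →
      rk (tCore t lam) =
        (∑ r ∈ Finset.Icc 1 ((t - 1) / 2), ((mr t lam (n * t) r : ℤ) - n).natAbs) ∧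
      rk (tCore t lam) =
        ∑ r ∈ Finset.Icc ((t + 2) / 2) (t - 1), ((mr t lam (n * t) r : ℤ) - n).natAbs) ∧
    (ZAsymmetric 1 (tCore t lam) →
      rk (tCore t lam) =
        (∑ r ∈ Finset.range ((t - 1) / 2), ((mr t lam (n * t) r : ℤ) - n).natAbs) ∧
      rk (tCore t lam) =
        ∑ r ∈ Finset.Icc (t / 2) (t - 2), ((mr t lam (n * t) r : ℤ) - n).natAbs) ∧
    (conjP (tCore t lam) = tCore t lam →
      rk (tCore t lam) =
        (∑ r ∈ Finset.range (t / 2), ((mr t lam (n * t) r : ℤ) - n).natAbs) ∧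
      rk (tCore t lam) =
        ∑ r ∈ Finset.Icc ((t + 1) / 2) (t - 1), ((mr t lam (n * t) r : ℤ) - n).natAbs) := by
  have ht0 : 0 < t := by omega
  have hN0 : 0 < AK.N0 t lam := AK.N0_pos ht0
  -- configuration for the orthogonal case (z = -1)
  set ρo : ℕ → ℕ := fun r => if r = 0 then 0 else t - r with hρo
  have hMo : ((2 * AK.N0 t lam : ℕ) : ℤ) = 2 * (AK.N0 t lam : ℤ) - 1 - (-1) := by
    push_cast; ring
  have hρeqo : ∀ r < t, (2 * AK.N0 t lam - r) % t = ρo r := fun r hr =>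
    AK.rho_orth ht0 hr
  have hinvo : ∀ r < t, ρo (ρo r) = r := by
    intro r hr
    by_cases h : r = 0
    · simp [hρo, h]
    · rw [hρo]
      simp only []
      rw [if_neg h, if_neg (by omega : ¬ t - r = 0)]
      omega
  have hsub1o : Finset.Icc 1 ((t - 1) / 2) ⊆ Finset.range t := by
    intro x hx; simp only [Finset.mem_Icc] at hx; exact Finset.mem_range.mpr (by omega)
  have hsub2o : Finset.Icc ((t + 2) / 2) (t - 1) ⊆ Finset.range t := by
    intro x hx; simp only [Finset.mem_Icc] at hx; exact Finset.mem_range.mpr (by omega)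
  have hdo : Disjoint (Finset.Icc 1 ((t - 1) / 2)) (Finset.Icc ((t + 2) / 2) (t - 1)) := by
    rw [Finset.disjoint_left]
    intro a h1 h2
    simp only [Finset.mem_Icc] at h1 h2
    omega
  have hm12o : (Finset.Icc 1 ((t - 1) / 2)).image ρo = Finset.Icc ((t + 2) / 2) (t - 1) := by
    ext y
    simp only [Finset.mem_image, Finset.mem_Icc]
    constructor
    · rintro ⟨r, ⟨h1, h2⟩, rfl⟩
      rw [hρo]; simp only []
      rw [if_neg (by omega : ¬ r = 0)]
      omega
    · rintro ⟨h1, h2⟩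
      refine ⟨t - y, ⟨by omega, by omega⟩, ?_⟩
      rw [hρo]; simp only []
      rw [if_neg (by omega : ¬ t - y = 0)]
      omega
  have hm21o : (Finset.Icc ((t + 2) / 2) (t - 1)).image ρo = Finset.Icc 1 ((t - 1) / 2) := by
    ext y
    simp only [Finset.mem_image, Finset.mem_Icc]
    constructor
    · rintro ⟨r, ⟨h1, h2⟩, rfl⟩
      rw [hρo]; simp only []
      rw [if_neg (by omega : ¬ r = 0)]
      omega
    · rintro ⟨h1, h2⟩
      refine ⟨t - y, ⟨by omega, by omega⟩, ?_⟩
      rw [hρo]; simp only []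
      rw [if_neg (by omega : ¬ t - y = 0)]
      omega
  have hfixo : ∀ r < t, r ∉ Finset.Icc 1 ((t - 1) / 2) →
      r ∉ Finset.Icc ((t + 2) / 2) (t - 1) → ρo r = r := by
    intro r hr h1 h2
    simp only [Finset.mem_Icc, not_and, not_le] at h1 h2
    by_cases h : r = 0
    · simp [hρo, h]
    · rw [hρo]; simp only []
      rw [if_neg h]
      omega
  -- configuration for the symplectic case (z = 1)
  set ρp : ℕ → ℕ := fun r => if r = t - 1 then t - 1 else t - 2 - r with hρp
  have hMp : ((2 * AK.N0 t lam - 2 : ℕ) : ℤ) = 2 * (AK.N0 t lam : ℤ) - 1 - 1 := by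
    omega
  have hρeqp : ∀ r < t, (2 * AK.N0 t lam - 2 - r) % t = ρp r := fun r hr =>
    AK.rho_sp ht hr
  have hinvp : ∀ r < t, ρp (ρp r) = r := by
    intro r hr
    by_cases h : r = t - 1
    · rw [hρp]; simp only []
      rw [if_pos h, if_pos rfl]
      omega
    · rw [hρp]; simp only []
      rw [if_neg h, if_neg (by omega : ¬ t - 2 - r = t - 1)]
      omega
  have hsub1p : Finset.range ((t - 1) / 2) ⊆ Finset.range t := by
    intro x hx; simp only [Finset.mem_range] at hx ⊢; omega
  have hsub2p : Finset.Icc (t / 2) (t - 2) ⊆ Finset.range t := by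
    intro x hx; simp only [Finset.mem_Icc] at hx; exact Finset.mem_range.mpr (by omega)
  have hdp : Disjoint (Finset.range ((t - 1) / 2)) (Finset.Icc (t / 2) (t - 2)) := by
    rw [Finset.disjoint_left]
    intro a h1 h2
    simp only [Finset.mem_range] at h1
    simp only [Finset.mem_Icc] at h2
    omega
  have hm12p : (Finset.range ((t - 1) / 2)).image ρp = Finset.Icc (t / 2) (t - 2) := by
    ext y
    simp only [Finset.mem_image, Finset.mem_range, Finset.mem_Icc]
    constructor
    · rintro ⟨r, h1, rfl⟩
      rw [hρp]; simp only []
      rw [if_neg (by omega : ¬ r = t - 1)]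
      omega
    · rintro ⟨h1, h2⟩
      refine ⟨t - 2 - y, by omega, ?_⟩
      rw [hρp]; simp only []
      rw [if_neg (by omega : ¬ t - 2 - y = t - 1)]
      omega
  have hm21p : (Finset.Icc (t / 2) (t - 2)).image ρp = Finset.range ((t - 1) / 2) := by
    ext y
    simp only [Finset.mem_image, Finset.mem_range, Finset.mem_Icc]
    constructor
    · rintro ⟨r, ⟨h1, h2⟩, rfl⟩
      rw [hρp]; simp only []
      rw [if_neg (by omega : ¬ r = t - 1)]
      omega
    · intro h1
      refine ⟨t - 2 - y, ⟨by omega, by omega⟩, ?_⟩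
      rw [hρp]; simp only []
      rw [if_neg (by omega : ¬ t - 2 - y = t - 1)]
      omega
  have hfixp : ∀ r < t, r ∉ Finset.range ((t - 1) / 2) →
      r ∉ Finset.Icc (t / 2) (t - 2) → ρp r = r := by
    intro r hr h1 h2
    simp only [Finset.mem_range, not_lt] at h1
    simp only [Finset.mem_Icc, not_and, not_le] at h2
    by_cases h : r = t - 1
    · rw [hρp]; simp only []
      rw [if_pos h]
      omega
    · rw [hρp]; simp only []
      rw [if_neg h]
      omega
  -- configuration for the self-conjugate case (z = 0)
  set ρs : ℕ → ℕ := fun r => t - 1 - r with hρs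
  have hMs : ((2 * AK.N0 t lam - 1 : ℕ) : ℤ) = 2 * (AK.N0 t lam : ℤ) - 1 - 0 := by
    omega
  have hρeqs : ∀ r < t, (2 * AK.N0 t lam - 1 - r) % t = ρs r := fun r hr =>
    AK.rho_so ht0 hr
  have hinvs : ∀ r < t, ρs (ρs r) = r := by
    intro r hr
    rw [hρs]; simp only []
    omega
  have hsub1s : Finset.range (t / 2) ⊆ Finset.range t := by
    intro x hx; simp only [Finset.mem_range] at hx ⊢; omega
  have hsub2s : Finset.Icc ((t + 1) / 2) (t - 1) ⊆ Finset.range t := by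
    intro x hx; simp only [Finset.mem_Icc] at hx; exact Finset.mem_range.mpr (by omega)
  have hds : Disjoint (Finset.range (t / 2)) (Finset.Icc ((t + 1) / 2) (t - 1)) := by
    rw [Finset.disjoint_left]
    intro a h1 h2
    simp only [Finset.mem_range] at h1
    simp only [Finset.mem_Icc] at h2
    omega
  have hm12s : (Finset.range (t / 2)).image ρs = Finset.Icc ((t + 1) / 2) (t - 1) := by
    ext y
    simp only [Finset.mem_image, Finset.mem_range, Finset.mem_Icc]
    constructor
    · rintro ⟨r, h1, rfl⟩
      rw [hρs]; simp only []
      omega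
    · rintro ⟨h1, h2⟩
      exact ⟨t - 1 - y, by omega, by rw [hρs]; simp only []; omega⟩
  have hm21s : (Finset.Icc ((t + 1) / 2) (t - 1)).image ρs = Finset.range (t / 2) := by
    ext y
    simp only [Finset.mem_image, Finset.mem_range, Finset.mem_Icc]
    constructor
    · rintro ⟨r, ⟨h1, h2⟩, rfl⟩
      rw [hρs]; simp only []
      omega
    · intro h1
      exact ⟨t - 1 - y, ⟨by omega, by omega⟩, by rw [hρs]; simp only []; omega⟩
  have hfixs : ∀ r < t, r ∉ Finset.range (t / 2) →
      r ∉ Finset.Icc ((t + 1) / 2) (t - 1) → ρs r = r := by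
    intro r hr h1 h2
    simp only [Finset.mem_range, not_lt] at h1
    simp only [Finset.mem_Icc, not_and, not_le] at h2
    rw [hρs]; simp only []
    omega
  refine ⟨fun hz => ⟨?_, ?_⟩, fun hz => ⟨?_, ?_⟩, fun hconj => ⟨?_, ?_⟩⟩
  · exact AK.final_case hlam ht0 hn hlen (by norm_num) hz _ hMo ρo hρeqo hinvo
      _ _ hsub1o hsub2o hdo hm12o hfixo
  · exact AK.final_case hlam ht0 hn hlen (by norm_num) hz _ hMo ρo hρeqo hinvo
      _ _ hsub2o hsub1o hdo.symm hm21o (fun r hr ha hb => hfixo r hr hb ha)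
  · exact AK.final_case hlam ht0 hn hlen (by norm_num) hz _ hMp ρp hρeqp hinvp
      _ _ hsub1p hsub2p hdp hm12p hfixp
  · exact AK.final_case hlam ht0 hn hlen (by norm_num) hz _ hMp ρp hρeqp hinvp
      _ _ hsub2p hsub1p hdp.symm hm21p (fun r hr ha hb => hfixp r hr hb ha)
  · have hz : ZAsymmetric 0 (tCore t lam) := fun i _ => by rw [hconj]; simp
    exact AK.final_case hlam ht0 hn hlen (by norm_num) hz _ hMs ρs hρeqs hinvs
      _ _ hsub1s hsub2s hds hm12s hfixs
  · have hz : ZAsymmetric 0 (tCore t lam) := fun i _ => by rw [hconj]; simp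
    exact AK.final_case hlam ht0 hn hlen (by norm_num) hz _ hMs ρs hρeqs hinvs
      _ _ hsub2s hsub1s hds.symm hm21s (fun r hr ha hb => hfixs r hr hb ha)

end
end

section
/- Let t ≥ 2 be an integer, let μ ⊆ λ be partitions with λ/μ tileable by t-ribbons, and let n ≥ l(λ). Then sgn_t(λ/μ) = sgn(w_t(λ;n)) · sgn(w_t(μ;n)). -/
open scoped BigOperators

noncomputable section

/-! ### Auxiliary lemmas for the proof -/

section Aux


def inv (t : ℕ) (S : Finset ℕ) : ℕ :=
  ((S ×ˢ S).filter fun p : ℕ × ℕ => p.2 < p.1 ∧ p.2 % t < p.1 % t).card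

def Q (t x y : ℕ) : Prop := (y < x ∧ y % t < x % t) ∨ (x < y ∧ x % t < y % t)

instance (t x y : ℕ) : Decidable (Q t x y) := by unfold Q; infer_instance

lemma inv_eq_sum (t : ℕ) (S : Finset ℕ) :
    inv t S = ∑ a ∈ S, ∑ b ∈ S, if b < a ∧ b % t < a % t then 1 else 0 := by
  rw [inv, Finset.card_filter, Finset.sum_product]

lemma inv_insert (t : ℕ) (x : ℕ) (T : Finset ℕ) (hx : x ∉ T) :
    inv t (insert x T) = inv t T + (T.filter (Q t x)).card := by
  rw [inv_eq_sum, inv_eq_sum, Finset.card_filter]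
  rw [Finset.sum_insert hx]
  have h1 : ∀ a ∈ T, (∑ b ∈ insert x T, if b < a ∧ b % t < a % t then 1 else 0)
      = (if x < a ∧ x % t < a % t then 1 else 0) +
        ∑ b ∈ T, if b < a ∧ b % t < a % t then 1 else 0 := by
    intro a _; rw [Finset.sum_insert hx]
  rw [Finset.sum_congr rfl h1, Finset.sum_add_distrib, Finset.sum_insert hx]
  have hxx : ¬ (x < x ∧ x % t < x % t) := by simp
  rw [if_neg hxx]
  have h2 : (∑ b ∈ T, if b < x ∧ b % t < x % t then 1 else 0) +
      (∑ a ∈ T, if x < a ∧ x % t < a % t then 1 else 0)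
      = ∑ y ∈ T, if Q t x y then 1 else 0 := by
    rw [← Finset.sum_add_distrib]
    refine Finset.sum_congr rfl fun y _ => ?_
    by_cases h1 : y < x ∧ y % t < x % t
    · have h2 : ¬(x < y ∧ x % t < y % t) := by omega
      simp [Q, h1, h2]
    · by_cases h2 : x < y ∧ x % t < y % t
      · simp [Q, h1, h2]
      · simp [Q, h1, h2]
  omega

lemma parity_step (t x : ℕ) (ht : 0 < t) (S : Finset ℕ) (hx : x ∈ S) (hxt : x + t ∉ S) :
    (-1 : ℤ) ^ inv t (insert (x + t) (S.erase x)) =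
      (-1) ^ inv t S * (-1) ^ (S.filter fun y => x < y ∧ y < x + t).card := by
  set T := S.erase x with hT
  have hxT : x ∉ T := Finset.notMem_erase x S
  have hxtT : x + t ∉ T := fun h => hxt (Finset.mem_of_mem_erase h)
  have hS : S = insert x T := by rw [hT, Finset.insert_erase hx]
  have hmod : (x + t) % t = x % t := Nat.add_mod_right x t
  -- pointwise behaviour
  have hpt : ∀ y ∈ T, (x < y ∧ y < x + t) → (Q t (x + t) y ↔ ¬ Q t x y) := by
    intro y _ ⟨h1, h2⟩
    have hne : y % t ≠ x % t := by
      intro h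
      have hd : (t : ℤ) ∣ (y : ℤ) - x := by
        have : x ≡ y [MOD t] := by unfold Nat.ModEq; omega
        exact this.dvd
      have := Int.le_of_dvd (by omega) hd
      omega
    unfold Q
    constructor
    · rintro (⟨-, hlt⟩ | ⟨hgt, -⟩)
      · rintro (⟨hy, -⟩ | ⟨-, hlt2⟩) <;> omega
      · omega
    · intro h
      left
      refine ⟨by omega, ?_⟩
      have : ¬ (x % t < y % t) := fun hc => h (Or.inr ⟨h1, hc⟩)
      omega
  have hpt2 : ∀ y ∈ T, ¬(x < y ∧ y < x + t) → (Q t (x + t) y ↔ Q t x y) := by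
    intro y hy hnb
    have hy1 : y ≠ x := fun h => hxT (h ▸ hy)
    have hy2 : y ≠ x + t := fun h => hxtT (h ▸ hy)
    have : y < x ∨ x + t < y := by omega
    unfold Q
    rcases this with h | h
    · constructor
      · rintro (⟨-, hlt⟩ | ⟨hgt, -⟩)
        · exact Or.inl ⟨h, by omega⟩
        · omega
      · rintro (⟨-, hlt⟩ | ⟨hgt, -⟩)
        · exact Or.inl ⟨by omega, by omega⟩
        · omega
    · constructor
      · rintro (⟨hlt, -⟩ | ⟨-, hm⟩)
        · omega
        · exact Or.inr ⟨by omega, by omega⟩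
      · rintro (⟨hlt, -⟩ | ⟨-, hm⟩)
        · omega
        · exact Or.inr ⟨by omega, by omega⟩
  -- card computations
  set T1 := T.filter (fun y => x < y ∧ y < x + t) with hT1
  have hc1 : (T.filter (Q t (x+t))).card + (T.filter (Q t x)).card
      = T1.card + 2 * ((T.filter fun y => ¬(x < y ∧ y < x+t)).filter (Q t x)).card := by
    have e1 : T.filter (Q t (x+t)) = (T1.filter fun y => ¬ Q t x y) ∪
        ((T.filter fun y => ¬(x < y ∧ y < x+t)).filter (Q t x)) := by
      rw [hT1, Finset.filter_filter, Finset.filter_filter]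
      ext y
      simp only [Finset.mem_union, Finset.mem_filter]
      constructor
      · intro ⟨hy, hq⟩
        by_cases hb : x < y ∧ y < x + t
        · exact Or.inl ⟨hy, hb, (hpt y hy hb).mp hq⟩
        · exact Or.inr ⟨hy, hb, (hpt2 y hy hb).mp hq⟩
      · rintro (⟨hy, hb, hq⟩ | ⟨hy, hb, hq⟩)
        · exact ⟨hy, (hpt y hy hb).mpr hq⟩
        · exact ⟨hy, (hpt2 y hy hb).mpr hq⟩
    have hdisj : Disjoint (T1.filter fun y => ¬ Q t x y)
        ((T.filter fun y => ¬(x < y ∧ y < x+t)).filter (Q t x)) := by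
      rw [Finset.disjoint_left]
      intro y h1 h2
      rw [hT1, Finset.mem_filter, Finset.mem_filter] at h1
      rw [Finset.mem_filter, Finset.mem_filter] at h2
      exact h2.1.2 h1.1.2
    rw [e1, Finset.card_union_of_disjoint hdisj]
    have e2 : (T1.filter fun y => ¬ Q t x y).card = T1.card - (T1.filter (Q t x)).card := by
      rw [Finset.filter_not, Finset.card_sdiff_of_subset (Finset.filter_subset _ _)]
    have e3 : (T.filter (Q t x)).card
        = (T1.filter (Q t x)).card + ((T.filter fun y => ¬(x < y ∧ y < x+t)).filter (Q t x)).card := by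
      rw [hT1, Finset.filter_filter, Finset.filter_filter]
      rw [← Finset.card_union_of_disjoint, ← Finset.filter_or]
      · apply Finset.card_nbij' id id <;> intro a ha <;>
          simp only [Finset.mem_coe, Finset.mem_filter, id] at * <;> tauto
      · rw [Finset.disjoint_left]
        intro y h1 h2
        rw [Finset.mem_filter] at h1 h2
        exact h2.2.1 h1.2.1
    have hle : (T1.filter (Q t x)).card ≤ T1.card := Finset.card_le_card (Finset.filter_subset _ _)
    omega
  -- put it together
  have hinvS : inv t S = inv t T + (T.filter (Q t x)).card := by
    rw [hS]; exact inv_insert t x T hxT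
  have hinvS' : inv t (insert (x+t) T) = inv t T + (T.filter (Q t (x+t))).card :=
    inv_insert t (x+t) T hxtT
  have hfS : S.filter (fun y => x < y ∧ y < x + t) = T1 := by
    rw [hT1, hS, Finset.filter_insert, if_neg (by omega : ¬(x < x ∧ x < x + t))]
  rw [hfS, hinvS, hinvS']
  have key : (T.filter (Q t (x+t))).card + (T.filter (Q t x)).card
      = T1.card + 2 * ((T.filter fun y => ¬(x < y ∧ y < x+t)).filter (Q t x)).card := hc1
  obtain ⟨c2, hc2⟩ : ∃ c2, (T.filter (Q t (x+t))).card + (T.filter (Q t x)).card = T1.card + 2 * c2 :=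
    ⟨_, key⟩
  have expand : ∀ a b : ℕ, (-1 : ℤ) ^ (a + b) = (-1) ^ a * (-1) ^ b := fun a b => pow_add _ _ _
  have sq : ((-1 : ℤ) ^ (T.filter (Q t x)).card) * ((-1) ^ (T.filter (Q t x)).card) = 1 := by
    rw [← pow_add]
    exact (neg_one_pow_eq_one_iff_even (by norm_num)).mpr (Even.add_self _)
  have h1 : ((-1 : ℤ)) ^ ((T.filter (Q t (x+t))).card + (T.filter (Q t x)).card)
      = (-1) ^ (T1.card + 2 * c2) := by rw [hc2]
  rw [pow_add, pow_add, pow_mul] at h1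
  norm_num at h1
  calc (-1 : ℤ) ^ (inv t T + (T.filter (Q t (x+t))).card)
      = (-1) ^ inv t T * ((-1) ^ (T.filter (Q t (x+t))).card * 1) := by rw [pow_add]; ring
    _ = (-1) ^ inv t T * ((-1) ^ (T.filter (Q t (x+t))).card *
          ((-1) ^ (T.filter (Q t x)).card * (-1) ^ (T.filter (Q t x)).card)) := by rw [sq]
    _ = (-1) ^ (inv t T + (T.filter (Q t x)).card) * (-1) ^ T1.card := by
          rw [pow_add]; rw [← mul_assoc ((-1:ℤ) ^ (T.filter (Q t (x+t))).card)]
          rw [h1]; ring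


lemma plen_spec (f : ℕ → ℕ) (hf : IsPartition f) : ∀ i, plen f ≤ i → f i = 0 := by
  have hne : {N | ∀ i, N ≤ i → f i = 0}.Nonempty := by
    obtain ⟨N, hN⟩ := hf.2; exact ⟨N, hN⟩
  exact Nat.sInf_mem hne

lemma lt_plen (f : ℕ → ℕ) (hf : IsPartition f) {i : ℕ} (h : f i ≠ 0) : i < plen f := by
  by_contra h'
  exact h (plen_spec f hf i (not_lt.mp h'))

lemma plen_mono (f g : ℕ → ℕ) (hg : IsPartition g) (hsub : SubP f g) : plen f ≤ plen g := by
  apply Nat.sInf_le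
  intro i hi
  have := plen_spec g hg i hi
  have := hsub i
  omega

lemma path_row (S : Set (ℕ × ℕ)) {c d : ℕ × ℕ}
    (h : Relation.ReflTransGen (fun x y => x ∈ S ∧ y ∈ S ∧ CellAdj x y) c d) (hd : d ∈ S) :
    ∀ i, c.1 ≤ i → i ≤ d.1 → ∃ j, (i, j) ∈ S := by
  induction h using Relation.ReflTransGen.head_induction_on with
  | refl =>
    intro i h1 h2
    have : i = d.1 := le_antisymm h2 h1
    exact ⟨d.2, by rwa [this]⟩
  | head hab _ ih =>
    rename_i a b _
    intro i h1 h2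
    obtain ⟨haS, hbS, hadj⟩ := hab
    by_cases hb : b.1 ≤ i
    · exact ih i hb h2
    · have : i = a.1 := by
        rcases hadj with ⟨he, -⟩ | ⟨-, h' | h'⟩ <;> omega
      exact ⟨a.2, by rwa [this]⟩

lemma path_cross (S : Set (ℕ × ℕ)) {c d : ℕ × ℕ}
    (h : Relation.ReflTransGen (fun x y => x ∈ S ∧ y ∈ S ∧ CellAdj x y) c d) :
    ∀ i, c.1 ≤ i → i + 1 ≤ d.1 → ∃ j, (i, j) ∈ S ∧ (i + 1, j) ∈ S := by
  induction h using Relation.ReflTransGen.head_induction_on with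
  | refl => intro i h1 h2; omega
  | head hab _ ih =>
    rename_i a b _
    intro i h1 h2
    obtain ⟨haS, hbS, hadj⟩ := hab
    by_cases hb : b.1 ≤ i
    · exact ih i hb h2
    · rcases hadj with ⟨he, -⟩ | ⟨he2, h' | h'⟩
      · exact ih i (by omega) h2
      · -- b.1 = a.1 + 1
        have hia : i = a.1 := by omega
        refine ⟨a.2, by rwa [hia], ?_⟩
        have : (i + 1, a.2) = b := by
          rw [Prod.ext_iff]; constructor
          · simp; omega
          · simp [← he2]
        rwa [this]
      · exact ih i (by omega) h2

lemma ribbon_struct (t : ℕ) (htp : 1 ≤ t) (lam mu : ℕ → ℕ)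
    (hlam : IsPartition lam) (hmu : IsPartition mu) (hrib : IsRibbon t lam mu) :
    ∃ a b, a ≤ b ∧ b < plen lam ∧
      (∀ i, mu i < lam i ↔ (a ≤ i ∧ i ≤ b)) ∧
      (∀ i, a ≤ i → i < b → mu i + 1 = lam (i + 1)) ∧
      ribbonHeight lam mu = b - a ∧
      mu b + t = lam a + (b - a) := by
  obtain ⟨hsub, hcard, hconn, h2x2⟩ := hrib
  set S := SkewCells lam mu with hSdef
  have hmemS : ∀ c : ℕ × ℕ, c ∈ S ↔ (mu c.1 ≤ c.2 ∧ c.2 < lam c.1) := fun c => Iff.rfl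
  have hrowlt : ∀ c : ℕ × ℕ, c ∈ S → c.1 < plen lam := by
    intro c hc
    exact lt_plen lam hlam (by have := (hmemS c).mp hc; omega)
  have hne : S.Nonempty := by
    apply Set.nonempty_of_ncard_ne_zero
    omega
  obtain ⟨c0, hc0⟩ := hne
  set R := (Finset.range (plen lam)).filter (fun i => mu i < lam i) with hRdef
  have hRmem : ∀ i, i ∈ R ↔ mu i < lam i := by
    intro i
    rw [hRdef, Finset.mem_filter, Finset.mem_range]
    constructor
    · tauto
    · intro h
      refine ⟨lt_plen lam hlam (by omega), h⟩
  have hRne : R.Nonempty := by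
    refine ⟨c0.1, (hRmem c0.1).mpr ?_⟩
    have := (hmemS c0).mp hc0; omega
  set a := R.min' hRne with hadef
  set b := R.max' hRne with hbdef
  have ha : mu a < lam a := (hRmem a).mp (R.min'_mem hRne)
  have hb : mu b < lam b := (hRmem b).mp (R.max'_mem hRne)
  have hab : a ≤ b := R.min'_le b ((hRmem b).mpr hb)
  have hbp : b < plen lam := lt_plen lam hlam (by omega)
  have hca : (a, mu a) ∈ S := (hmemS _).mpr ⟨le_refl _, ha⟩
  have hcb : (b, mu b) ∈ S := (hmemS _).mpr ⟨le_refl _, hb⟩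
  have hpath := hconn (a, mu a) hca (b, mu b) hcb
  have occ_iff : ∀ i, mu i < lam i ↔ (a ≤ i ∧ i ≤ b) := by
    intro i
    constructor
    · intro h
      exact ⟨R.min'_le i ((hRmem i).mpr h), R.le_max' i ((hRmem i).mpr h)⟩
    · rintro ⟨h1, h2⟩
      obtain ⟨j, hj⟩ := path_row S hpath hcb i h1 h2
      have := (hmemS (i, j)).mp hj
      simp only at this
      omega
  have hstep : ∀ i, a ≤ i → i < b → mu i + 1 = lam (i + 1) := by
    intro i h1 h2
    obtain ⟨j, hj1, hj2⟩ := path_cross S hpath i h1 (by omega)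
    have e1 := (hmemS _).mp hj1
    have e2 := (hmemS _).mp hj2
    simp only at e1 e2
    have hlt : mu i < lam (i + 1) := by omega
    by_contra hne2
    have hge : mu i + 2 ≤ lam (i + 1) := by omega
    apply h2x2
    refine ⟨i, mu i, ?_, ?_, ?_, ?_⟩ <;> rw [hmemS] <;> simp only
    · constructor
      · exact le_refl _
      · have := hlam.1 (Nat.le_add_right i 1); omega
    · constructor
      · exact hmu.1 (Nat.le_add_right i 1)
      · omega
    · constructor
      · omega
      · have := hlam.1 (Nat.le_add_right i 1); omega
    · constructor
      · have := hmu.1 (Nat.le_add_right i 1); omega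
      · omega
  have heq_outside : ∀ i, ¬(a ≤ i ∧ i ≤ b) → lam i = mu i := by
    intro i h
    have h2 : ¬ (mu i < lam i) := fun hc => h ((occ_iff i).mp hc)
    have := hsub i
    omega
  -- cardinality of S
  set F := (Finset.Icc a b).biUnion
      (fun i => ({i} : Finset ℕ) ×ˢ Finset.Ico (mu i) (lam i)) with hFdef
  have hSF : S = ↑F := by
    ext c
    rw [hmemS, hFdef]
    simp only [Finset.coe_biUnion, Set.mem_iUnion, Finset.mem_coe, Finset.mem_Icc,
      Finset.mem_product, Finset.mem_singleton, Finset.mem_Ico]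
    constructor
    · intro hc
      have hocc := (occ_iff c.1).mp (by omega)
      exact ⟨c.1, hocc, rfl, hc.1, hc.2⟩
    · rintro ⟨i, hi, h1, h2, h3⟩
      rw [← h1] at h2 h3
      exact ⟨h2, h3⟩
  have hFcard : F.card = t := by
    rw [← hcard, hSF, Set.ncard_coe_finset]
  have hFcard2 : F.card = ∑ i ∈ Finset.Icc a b, (lam i - mu i) := by
    rw [hFdef, Finset.card_biUnion]
    · refine Finset.sum_congr rfl fun i _ => ?_
      rw [Finset.card_product, Finset.card_singleton, Nat.card_Ico, one_mul]
    · intro i _ j _ hij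
      rw [Function.onFun, Finset.disjoint_left]
      intro c h1 h2
      rw [Finset.mem_product, Finset.mem_singleton] at h1 h2
      exact hij (h1.1 ▸ h2.1 ▸ rfl)
  -- telescoping sum
  have htele : ∀ b', a ≤ b' → (∀ i, a ≤ i → i < b' → mu i + 1 = lam (i + 1)) →
      ∑ i ∈ Finset.Icc a b', ((lam i : ℤ) - (mu i : ℤ))
        = (lam a : ℤ) - (mu b' : ℤ) + ((b' : ℤ) - (a : ℤ)) := by
    intro b' hab'
    induction b', hab' using Nat.le_induction with
    | base =>
      intro _
      rw [Finset.Icc_self, Finset.sum_singleton]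
      ring
    | succ m hm ih =>
      intro hstep'
      rw [Finset.sum_Icc_succ_top (by omega : a ≤ m + 1)]
      rw [ih (fun i h1 h2 => hstep' i h1 (by omega))]
      have := hstep' m hm (by omega)
      have hc : (lam (m+1) : ℤ) = (mu m : ℤ) + 1 := by
        rw [← this]; push_cast; ring
      rw [hc]
      push_cast
      ring
  have hsum := htele b hab hstep
  -- convert the ℕ sum
  have hsum2 : ((t : ℤ)) = (lam a : ℤ) - (mu b : ℤ) + ((b : ℤ) - (a : ℤ)) := by
    have hcast : ((∑ i ∈ Finset.Icc a b, (lam i - mu i) : ℕ) : ℤ)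
        = ∑ i ∈ Finset.Icc a b, ((lam i : ℤ) - (mu i : ℤ)) := by
      rw [Nat.cast_sum]
      refine Finset.sum_congr rfl fun i hi => ?_
      have := hsub i
      omega
    rw [← hsum, ← hcast, ← hFcard2, hFcard]
  have hsize : mu b + t = lam a + (b - a) := by omega
  -- ribbon height
  have hheight : ribbonHeight lam mu = b - a := by
    have himg : Prod.fst '' S = Set.Icc a b := by
      ext i
      simp only [Set.mem_image, Set.mem_Icc]
      constructor
      · rintro ⟨c, hc, rfl⟩
        have := (hmemS c).mp hc
        exact (occ_iff c.1).mp (by omega)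
      · intro hi
        exact ⟨(i, mu i), (hmemS _).mpr ⟨le_refl _, (occ_iff i).mpr hi⟩, rfl⟩
    rw [ribbonHeight, himg, ← Finset.coe_Icc, Set.ncard_coe_finset, Nat.card_Icc]
    omega
  exact ⟨a, b, hab, hbp, occ_iff, hstep, hheight, hsize⟩

lemma beta_step (t : ℕ) (htp : 1 ≤ t) (lam mu : ℕ → ℕ) (hlam : IsPartition lam)
    (hmu : IsPartition mu) (hrib : IsRibbon t lam mu) (N : ℕ) (hN : plen lam ≤ N) :
    sgnW t lam N = sgnW t mu N * (-1) ^ ribbonHeight lam mu := by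
  obtain ⟨a, b, hab, hbp, occ_iff, hstep, hheight, hsize⟩ :=
    ribbon_struct t htp lam mu hlam hmu hrib
  have hsub : SubP mu lam := hrib.1
  have heqout : ∀ i, ¬(a ≤ i ∧ i ≤ b) → lam i = mu i := by
    intro i h
    have h2 : ¬ (mu i < lam i) := fun hc => h ((occ_iff i).mp hc)
    have := hsub i
    omega
  have hbN : b < N := lt_of_lt_of_le hbp hN
  have haN : a < N := lt_of_le_of_lt hab hbN
  have hmua : mu a < lam a := (occ_iff a).mpr ⟨le_refl a, hab⟩
  set bl : ℕ → ℕ := fun i => lam i + (N - 1 - i) with hbl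
  set bm : ℕ → ℕ := fun i => mu i + (N - 1 - i) with hbm
  have hblam : betaSet lam N = (Finset.range N).image bl := rfl
  have hbmu : betaSet mu N = (Finset.range N).image bm := rfl
  set x := bm b with hx
  have hxplus : x + t = bl a := by
    have h1 : bm b = mu b + (N - 1 - b) := rfl
    have h2 : bl a = lam a + (N - 1 - a) := rfl
    omega
  set Dm := ((Finset.range N).erase b).image bm with hDm
  set Dl := ((Finset.range N).erase a).image bl with hDl
  have hbetamu : betaSet mu N = insert x Dm := by
    rw [hbmu, ← Finset.insert_erase (Finset.mem_range.mpr hbN), Finset.image_insert]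
  have hbetalam : betaSet lam N = insert (x + t) Dl := by
    rw [hblam, ← Finset.insert_erase (Finset.mem_range.mpr haN), Finset.image_insert, hxplus]
  have hxnotD : x ∉ Dm := by
    rw [hDm]
    intro hmem
    obtain ⟨i, hi, heq⟩ := Finset.mem_image.mp hmem
    rw [Finset.mem_erase, Finset.mem_range] at hi
    have h1 : bm i = mu i + (N - 1 - i) := rfl
    have h2 : x = mu b + (N - 1 - b) := rfl
    rcases lt_trichotomy i b with h | h | h
    · have := hmu.1 (le_of_lt h)
      omega
    · exact hi.1 h
    · have := hmu.1 (le_of_lt h)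
      omega
  have herase : (betaSet mu N).erase x = Dm := by
    rw [hbetamu, Finset.erase_insert hxnotD]
  have hDD : Dm = Dl := by
    ext y
    rw [hDm, hDl]
    simp only [Finset.mem_image, Finset.mem_erase, Finset.mem_range]
    constructor
    · rintro ⟨i, ⟨hib, hiN⟩, rfl⟩
      by_cases hcase : a ≤ i ∧ i < b
      · refine ⟨i + 1, ⟨by omega, by omega⟩, ?_⟩
        have := hstep i hcase.1 hcase.2
        show lam (i + 1) + (N - 1 - (i + 1)) = mu i + (N - 1 - i)
        omega
      · have h0 : lam i = mu i := heqout i (by omega)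
        exact ⟨i, ⟨by omega, hiN⟩, by show lam i + _ = mu i + _; omega⟩
    · rintro ⟨i, ⟨hia, hiN⟩, rfl⟩
      by_cases hcase : a < i ∧ i ≤ b
      · refine ⟨i - 1, ⟨by omega, by omega⟩, ?_⟩
        have h1 := hstep (i - 1) (by omega) (by omega)
        have h2 : i - 1 + 1 = i := by omega
        rw [h2] at h1
        show mu (i - 1) + (N - 1 - (i - 1)) = lam i + (N - 1 - i)
        omega
      · have h0 : lam i = mu i := heqout i (by omega)
        exact ⟨i, ⟨by omega, hiN⟩, by show mu i + _ = lam i + _; omega⟩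
  have hxmem : x ∈ betaSet mu N := by rw [hbetamu]; exact Finset.mem_insert_self x Dm
  have hxtnot : x + t ∉ betaSet mu N := by
    rw [hbetamu]
    intro hmem
    rcases Finset.mem_insert.mp hmem with h | h
    · omega
    · rw [hDm] at h
      obtain ⟨i, hi, heq⟩ := Finset.mem_image.mp h
      rw [Finset.mem_erase, Finset.mem_range] at hi
      have h1 : bm i = mu i + (N - 1 - i) := rfl
      have h2 : bl a = lam a + (N - 1 - a) := rfl
      rw [hxplus] at heq
      rcases lt_trichotomy i a with h3 | h3 | h3
      · have h4 : lam i = mu i := heqout i (by omega)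
        have := hlam.1 (le_of_lt h3)
        omega
      · subst h3; omega
      · have := hmu.1 (le_of_lt h3)
        omega
  have hfilt : (betaSet mu N).filter (fun y => x < y ∧ y < x + t)
      = (Finset.Ico a b).image bm := by
    ext y
    rw [Finset.mem_filter, hbmu]
    simp only [Finset.mem_image, Finset.mem_range, Finset.mem_Ico]
    constructor
    · rintro ⟨⟨i, hiN, rfl⟩, h1, h2⟩
      have e1 : bm i = mu i + (N - 1 - i) := rfl
      have e2 : x = mu b + (N - 1 - b) := rfl
      refine ⟨i, ⟨?_, ?_⟩, rfl⟩
      · by_contra h3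
        have h4 : lam i = mu i := heqout i (by omega)
        have := hlam.1 (show i ≤ a by omega)
        rw [hxplus] at h2
        have e3 : bl a = lam a + (N - 1 - a) := rfl
        omega
      · by_contra h3
        have := hmu.1 (show b ≤ i by omega)
        omega
    · rintro ⟨i, ⟨h1, h2⟩, rfl⟩
      have e1 : bm i = mu i + (N - 1 - i) := rfl
      have e2 : x = mu b + (N - 1 - b) := rfl
      have e3 : bl a = lam a + (N - 1 - a) := rfl
      have h4 := hmu.1 (show i ≤ b by omega)
      have h5 := hmu.1 h1
      refine ⟨⟨i, by omega, rfl⟩, by omega, by rw [hxplus]; omega⟩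
  have hfcard : ((betaSet mu N).filter (fun y => x < y ∧ y < x + t)).card = b - a := by
    rw [hfilt, Finset.card_image_of_injOn, Nat.card_Ico]
    intro i hi j hj heq
    rw [Finset.mem_coe, Finset.mem_Ico] at hi hj
    have e1 : bm i = mu i + (N - 1 - i) := rfl
    have e2 : bm j = mu j + (N - 1 - j) := rfl
    rcases lt_trichotomy i j with h | h | h
    · have := hmu.1 (le_of_lt h)
      omega
    · exact h
    · have := hmu.1 (le_of_lt h)
      omega
  have hsgnl : sgnW t lam N = (-1 : ℤ) ^ inv t (betaSet lam N) := rfl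
  have hsgnm : sgnW t mu N = (-1 : ℤ) ^ inv t (betaSet mu N) := rfl
  rw [hsgnl, hsgnm]
  have hset : betaSet lam N = insert (x + t) ((betaSet mu N).erase x) := by
    rw [hbetalam, herase, hDD]
  rw [hset, parity_step t x (by omega) (betaSet mu N) hxmem hxtnot, hfcard, hheight]

lemma sgnW_sq (t : ℕ) (f : ℕ → ℕ) (N : ℕ) : sgnW t f N * sgnW t f N = 1 := by
  show ((-1 : ℤ) ^ _) * ((-1 : ℤ) ^ _) = 1
  rw [← pow_add]
  exact Even.neg_one_pow ⟨_, rfl⟩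

lemma main_aux (t n : ℕ) (htp : 1 ≤ t) :
    ∀ k (ν : ℕ → ℕ → ℕ) (mu lam : ℕ → ℕ),
      IsRibbonDecomp t mu lam k ν → plen lam ≤ n →
      (-1 : ℤ) ^ decompHeight ν k = sgnW t lam n * sgnW t mu n := by
  intro k
  induction k with
  | zero =>
    intro ν mu lam hd _
    obtain ⟨h0, hk, -, -⟩ := hd
    have : mu = lam := by rw [← h0, hk]
    rw [this, decompHeight, Finset.sum_range_zero, pow_zero, sgnW_sq]
  | succ k ih =>
    intro ν mu lam hd hn
    obtain ⟨h0, hk, hpart, hribs⟩ := hd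
    have hd' : IsRibbonDecomp t mu (ν k) k ν :=
      ⟨h0, rfl, fun i hi => hpart i (le_trans hi (Nat.le_succ k)),
        fun i hi => hribs i (Nat.lt_succ_of_lt hi)⟩
    have hrib : IsRibbon t lam (ν k) := by
      have := hribs k (Nat.lt_succ_self k)
      rwa [hk] at this
    have hlam : IsPartition lam := by
      have := hpart (k + 1) (le_refl _)
      rwa [hk] at this
    have hlam' : IsPartition (ν k) := hpart k (Nat.le_succ k)
    have hn' : plen (ν k) ≤ n := le_trans (plen_mono (ν k) lam hlam hrib.1) hn
    have hih := ih ν mu (ν k) hd' hn'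
    have hbs := beta_step t htp lam (ν k) hlam hlam' hrib n hn
    rw [decompHeight, Finset.sum_range_succ, ← decompHeight, pow_add, hih, hk, hbs]
    have := sgnW_sq t (ν k) n
    calc sgnW t (ν k) n * sgnW t mu n * (-1 : ℤ) ^ ribbonHeight lam (ν k)
        = (sgnW t (ν k) n * (-1 : ℤ) ^ ribbonHeight lam (ν k)) * sgnW t mu n := by ring
      _ = _ := rfl

end Aux

/-- **Lemma.** For a `t`-tileable skew shape `λ/μ` and any `n ≥ l(λ)`,
`sgn_t(λ/μ) = sgn(w_t(λ;n)) · sgn(w_t(μ;n))`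
(the left-hand side being `(-1)^{ht(D)}` for any ribbon decomposition `D`). -/
theorem sgn_skew_eq_sgnW (t : ℕ) (ht : 2 ≤ t) (lam mu : ℕ → ℕ)
    (hlam : IsPartition lam) (hmu : IsPartition mu) (hsub : SubP mu lam)
    (htile : Tileable t mu lam) (n : ℕ) (hn : plen lam ≤ n) :
    ∀ k ν, IsRibbonDecomp t mu lam k ν →
      (-1 : ℤ) ^ decompHeight ν k = sgnW t lam n * sgnW t mu n := by
  intro k ν hd
  exact main_aux t n (by omega) k ν mu lam hd hn

end
end

section
/- Let t ≥ 2 be an integer and let μ ⊆ λ be partitions with λ/μ tileable by t-ribbons. Then sgn_t(λ/μ) · sgn_t(λ'/μ') = (−1)^{(t−1)·(|λ^{(0)}|+⋯+|λ^{(t−1)}| − |μ^{(0)}|−⋯−|μ^{(t−1)}|)}, where λ', μ' are the conjugate partitions and (λ^{(0)},…,λ^{(t−1)}), (μ^{(0)},…,μ^{(t−1)}) are the t-quotients of λ and μ. -/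
open scoped BigOperators

noncomputable section

namespace SgnAux
open Finset

open Finset

lemma plen_zero {f : ℕ → ℕ} (h : ∃ N, ∀ i, N ≤ i → f i = 0) :
    ∀ i, plen f ≤ i → f i = 0 := by
  have : plen f ∈ {N | ∀ i, N ≤ i → f i = 0} := Nat.sInf_mem h
  exact this

lemma plen_le {f : ℕ → ℕ} {N : ℕ} (h : ∀ i, N ≤ i → f i = 0) : plen f ≤ N :=
  Nat.sInf_le h

lemma lt_plen_of_pos {f : ℕ → ℕ} (h : ∃ N, ∀ i, N ≤ i → f i = 0) {i : ℕ}
    (hi : 0 < f i) : i < plen f := by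
  by_contra hc
  have := plen_zero h i (le_of_not_gt hc)
  omega

lemma psize_eq_sum {f : ℕ → ℕ} {M : ℕ} (hM : ∀ i, M ≤ i → f i = 0) :
    psize f = ∑ i ∈ range M, f i := by
  have h1 : plen f ≤ M := plen_le hM
  have h0 : ∀ i, plen f ≤ i → f i = 0 := plen_zero ⟨M, hM⟩
  refine (Finset.sum_subset (by simpa using h1) ?_)
  intro x _ hx
  exact h0 x (by simpa using hx)

lemma subP_plen_le {mu lam : ℕ → ℕ} (hsub : SubP mu lam)
    (hl : ∃ N, ∀ i, N ≤ i → lam i = 0) : plen mu ≤ plen lam := by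
  apply plen_le
  intro i hi
  have := plen_zero hl i hi
  have := hsub i
  omega

lemma subP_trans {a b c : ℕ → ℕ} (h1 : SubP a b) (h2 : SubP b c) : SubP a c :=
  fun i => le_trans (h1 i) (h2 i)

/-! conjP lemmas -/

lemma conj_set_finite {f : ℕ → ℕ} (hf : ∃ N, ∀ i, N ≤ i → f i = 0) (j : ℕ) :
    {i | j < f i}.Finite := by
  obtain ⟨N, hN⟩ := hf
  apply Set.Finite.subset (Set.finite_Iio N)
  intro k hk
  simp only [Set.mem_setOf_eq] at hk
  simp only [Set.mem_Iio]
  by_contra hc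
  have := hN k (le_of_not_gt hc)
  omega

lemma conj_lt_iff {f : ℕ → ℕ} (hf : IsPartition f) (i j : ℕ) :
    j < conjP f i ↔ i < f j := by
  have hfin := conj_set_finite hf.2 i
  have lower : ∀ k k', k' ≤ k → k ∈ {i' | i < f i'} → k' ∈ {i' | i < f i'} := by
    intro k k' hk hkm
    simp only [Set.mem_setOf_eq] at *
    exact lt_of_lt_of_le hkm (hf.1 hk)
  constructor
  · intro h
    by_contra hc
    have hsub : {i' | i < f i'} ⊆ Set.Iio j := by
      intro k hk
      simp only [Set.mem_Iio]
      by_contra hc2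
      exact hc (lower k j (le_of_not_gt hc2) hk)
    have := Set.ncard_le_ncard hsub (Set.finite_Iio j)
    have hIio : (Set.Iio j).ncard = j := by
      rw [← Finset.coe_Iio, Set.ncard_coe_finset, Nat.card_Iio]
    rw [hIio] at this
    exact absurd h (by unfold conjP; omega)
  · intro h
    have hsub : Set.Iic j ⊆ {i' | i < f i'} := by
      intro k hk
      exact lower j k (Set.mem_Iic.mp hk) h
    have := Set.ncard_le_ncard hsub hfin
    have hIic : (Set.Iic j).ncard = j + 1 := by
      rw [← Finset.coe_Iic, Set.ncard_coe_finset, Nat.card_Iic]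
    rw [hIic] at this
    unfold conjP; omega

lemma conj_isPartition {f : ℕ → ℕ} (hf : IsPartition f) : IsPartition (conjP f) := by
  constructor
  · intro i i' hii
    apply Set.ncard_le_ncard _ (conj_set_finite hf.2 i)
    intro k hk
    simp only [Set.mem_setOf_eq] at *
    omega
  · refine ⟨f 0, fun j hj => ?_⟩
    have : {i | j < f i} = ∅ := by
      ext k
      simp only [Set.mem_setOf_eq, Set.mem_empty_iff_false, iff_false, not_lt]
      exact le_trans (hf.1 (Nat.zero_le k)) hj
    rw [conjP, this, Set.ncard_empty]

lemma conj_subP {mu lam : ℕ → ℕ} (hlam : IsPartition lam) (hsub : SubP mu lam) :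
    SubP (conjP mu) (conjP lam) := by
  intro j
  apply Set.ncard_le_ncard _ (conj_set_finite hlam.2 j)
  intro k hk
  simp only [Set.mem_setOf_eq] at *
  exact lt_of_lt_of_le hk (hsub k)

/-! parity helpers -/

lemma zmod2_add_self (x : ZMod 2) : x + x = 0 := by
  have : ((2 : ℕ) : ZMod 2) = 0 := by decide
  calc x + x = (2 : ℕ) * x := by push_cast; ring
  _ = 0 := by rw [this, zero_mul]

lemma neg_one_pow_congr {m n : ℕ} (h : (m : ZMod 2) = n) :
    ((-1 : ℤ)) ^ m = (-1) ^ n := by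
  have h2 : m % 2 = n % 2 := (ZMod.natCast_eq_natCast_iff m n 2).mp h
  rcases Nat.even_or_odd m with he | ho
  · have : Even n := by
      rw [Nat.even_iff] at he ⊢; omega
    rw [he.neg_one_pow, this.neg_one_pow]
  · have : Odd n := by
      rw [Nat.odd_iff] at ho ⊢; omega
    rw [ho.neg_one_pow, this.neg_one_pow]

lemma msign_natCast (n : ℕ) : msign (n : ℤ) = (-1 : ℤ) ^ n := by
  unfold msign
  by_cases h : Even n
  · rw [if_pos (by exact_mod_cast (Int.even_coe_nat n).mpr h), h.neg_one_pow]
  · have ho : Odd n := Nat.not_even_iff_odd.mp h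
    rw [if_neg (by rw [Int.even_coe_nat]; exact h), ho.neg_one_pow]

lemma mod_gap {t a b : ℕ} (ht : 1 ≤ t) (hab : a < b) (h : a % t = b % t) :
    a + t ≤ b := by
  have hd : a / t < b / t := by
    rcases lt_or_ge (a / t) (b / t) with h' | h'
    · exact h'
    · exfalso
      have hb : b ≤ a := by
        calc b = t * (b / t) + b % t := (Nat.div_add_mod b t).symm
          _ ≤ t * (a / t) + a % t := by rw [h]; exact Nat.add_le_add_right (Nat.mul_le_mul_left t h') _
          _ = a := Nat.div_add_mod a t
      omega
  calc a + t = t * (a / t) + a % t + t := by rw [Nat.div_add_mod]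
    _ = t * (a / t + 1) + b % t := by rw [h]; ring
    _ ≤ t * (b / t) + b % t := Nat.add_le_add_right (Nat.mul_le_mul_left t hd) _
    _ = b := Nat.div_add_mod b t


section Struct
variable {t : ℕ} {lam mu : ℕ → ℕ}

lemma rows_ivt {S : Set (ℕ × ℕ)} {c d : ℕ × ℕ}
    (h : Relation.ReflTransGen (fun x y => x ∈ S ∧ y ∈ S ∧ CellAdj x y) c d)
    (hc : c ∈ S) : ∀ m, c.1 ≤ m → m ≤ d.1 → ∃ e ∈ S, e.1 = m := by
  induction h with
  | refl =>
    intro m h1 h2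
    exact ⟨c, hc, le_antisymm h1 h2⟩
  | @tail x y hsteps hstep ih =>
    intro m h1 h2
    by_cases hm : m ≤ x.1
    · exact ih m h1 hm
    · push_neg at hm
      have hy : y ∈ S := hstep.2.1
      have hadj : CellAdj x y := hstep.2.2
      have : y.1 ≤ x.1 + 1 := by
        rcases hadj with ⟨h', _⟩ | ⟨_, h' | h'⟩ <;> omega
      have : m = y.1 := by omega
      exact ⟨y, hy, this.symm⟩

lemma cross_ivt {S : Set (ℕ × ℕ)} {c d : ℕ × ℕ}
    (h : Relation.ReflTransGen (fun x y => x ∈ S ∧ y ∈ S ∧ CellAdj x y) c d)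
    (i : ℕ) (hc : c.1 ≤ i) (hd : i + 1 ≤ d.1) :
    ∃ j, (i, j) ∈ S ∧ (i + 1, j) ∈ S := by
  induction h with
  | refl => omega
  | @tail x y hsteps hstep ih =>
    by_cases hx : i + 1 ≤ x.1
    · exact ih hx
    · push_neg at hx
      have hxS : x ∈ S := hstep.1
      have hyS : y ∈ S := hstep.2.1
      have hadj : CellAdj x y := hstep.2.2
      rcases hadj with ⟨h', _⟩ | ⟨h2, h' | h'⟩
      · omega
      · -- y.1 = x.1 + 1
        have hx1 : x.1 = i := by omega
        have hy1 : y.1 = i + 1 := by omega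
        refine ⟨x.2, ?_, ?_⟩
        · rwa [show ((i : ℕ), x.2) = x from Prod.ext hx1.symm rfl]
        · rw [show ((i + 1 : ℕ), x.2) = y from Prod.ext hy1.symm h2]
          exact hyS
      · omega

lemma telescope (lam mu : ℕ → ℕ) (a : ℕ) :
    ∀ n, (∀ i, a ≤ i → i < a + n → lam (i + 1) = mu i + 1) →
      (∀ i, mu i ≤ lam i) →
      (∑ i ∈ Finset.Icc a (a + n), (lam i - mu i)) + a + mu (a + n) = (a + n) + lam a := by
  intro n
  induction n with
  | zero =>
    intro _ hsub
    simp only [Nat.add_zero, Finset.Icc_self, Finset.sum_singleton]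
    have := hsub a
    omega
  | succ n ih =>
    intro hstep hsub
    have hrw : a + (n + 1) = (a + n) + 1 := by omega
    rw [hrw, Finset.sum_Icc_succ_top (by omega)]
    have ihh := ih (fun i h1 h2 => hstep i h1 (by omega)) hsub
    have h1 := hstep (a + n) (by omega) (by omega)
    have h2 := hsub (a + n + 1)
    have h3 := hsub a
    omega

lemma ribbon_struct (hlam : IsPartition lam) (hmu : IsPartition mu)
    (htpos : 1 ≤ t) (hR : IsRibbon t lam mu) :
    ∃ a b : ℕ, a ≤ b ∧ (∀ i, mu i < lam i ↔ (a ≤ i ∧ i ≤ b)) ∧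
      (∀ i, a ≤ i → i < b → lam (i + 1) = mu i + 1) ∧
      (t + a + mu b = b + lam a) ∧
      ribbonHeight lam mu = b - a ∧ mu b < lam a := by
  obtain ⟨hsub, hcard, hconn, h2x2⟩ := hR
  set S := SkewCells lam mu with hSdef
  -- nonempty
  have hSne : S.Nonempty := Set.nonempty_of_ncard_ne_zero (by omega)
  have hcell_row : ∀ c : ℕ × ℕ, c ∈ S → mu c.1 < lam c.1 := by
    intro c hc
    obtain ⟨h1, h2⟩ := hc
    omega
  have hrow_plen : ∀ i, mu i < lam i → i < plen lam := by
    intro i hi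
    exact lt_plen_of_pos hlam.2 (by omega)
  set RF : Finset ℕ := (Finset.range (plen lam)).filter (fun i => mu i < lam i) with hRF
  have hmemRF : ∀ i, i ∈ RF ↔ mu i < lam i := by
    intro i
    simp only [hRF, Finset.mem_filter, Finset.mem_range]
    exact ⟨fun h => h.2, fun h => ⟨hrow_plen i h, h⟩⟩
  have hRFne : RF.Nonempty := by
    obtain ⟨c, hc⟩ := hSne
    exact ⟨c.1, (hmemRF c.1).mpr (hcell_row c hc)⟩
  set a := RF.min' hRFne with ha
  set b := RF.max' hRFne with hb
  have hab : a ≤ b := Finset.min'_le _ _ (RF.max'_mem hRFne)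
  have haR : mu a < lam a := (hmemRF a).mp (RF.min'_mem hRFne)
  have hbR : mu b < lam b := (hmemRF b).mp (RF.max'_mem hRFne)
  -- interval
  have hrow : ∀ i, mu i < lam i ↔ (a ≤ i ∧ i ≤ b) := by
    intro i
    constructor
    · intro h
      exact ⟨RF.min'_le i ((hmemRF i).mpr h), RF.le_max' i ((hmemRF i).mpr h)⟩
    · rintro ⟨h1, h2⟩
      have hca : ((a, mu a) : ℕ × ℕ) ∈ S := ⟨le_refl _, haR⟩
      have hcb : ((b, mu b) : ℕ × ℕ) ∈ S := ⟨le_refl _, hbR⟩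
      obtain ⟨e, he, he1⟩ := rows_ivt (hconn _ hca _ hcb) hca i h1 h2
      have := hcell_row e he
      rwa [he1] at this
  -- step
  have hstep : ∀ i, a ≤ i → i < b → lam (i + 1) = mu i + 1 := by
    intro i h1 h2
    have hiR : mu i < lam i := (hrow i).mpr ⟨h1, by omega⟩
    have hi1R : mu (i + 1) < lam (i + 1) := (hrow (i + 1)).mpr ⟨by omega, by omega⟩
    have hci : ((i, mu i) : ℕ × ℕ) ∈ S := ⟨le_refl _, hiR⟩
    have hci1 : ((i + 1, mu (i + 1)) : ℕ × ℕ) ∈ S := ⟨le_refl _, hi1R⟩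
    obtain ⟨j, hj1, hj2⟩ := cross_ivt (hconn _ hci _ hci1) i (le_refl i) (le_refl (i + 1))
    -- overlap: mu i ≤ j < lam (i+1)
    have hov : mu i < lam (i + 1) := by
      obtain ⟨ha1, _⟩ := hj1
      obtain ⟨_, hb2⟩ := hj2
      simp only at ha1 hb2
      omega
    -- no 2x2 gives upper bound
    have hub : lam (i + 1) ≤ mu i + 1 := by
      by_contra hc
      push_neg at hc
      apply h2x2
      have hmono : mu (i + 1) ≤ mu i := hmu.1 (by omega)
      have hlm : lam (i + 1) ≤ lam i := hlam.1 (by omega)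
      exact ⟨i, mu i, ⟨le_refl _, hiR⟩,
        ⟨show mu (i + 1) ≤ mu i from hmono, show mu i < lam (i + 1) by omega⟩,
        ⟨show mu i ≤ mu i + 1 by omega, show mu i + 1 < lam i by omega⟩,
        ⟨show mu (i + 1) ≤ mu i + 1 by omega, show mu i + 1 < lam (i + 1) by omega⟩⟩
    omega
  -- cells as a finset
  set SF : Finset (ℕ × ℕ) := (Finset.Icc a b).biUnion
    (fun i => (Finset.Ico (mu i) (lam i)).image (fun j => (i, j))) with hSF
  have hSS : S = ↑SF := by
    ext ⟨i, j⟩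
    simp only [hSdef, SkewCells, Set.mem_setOf_eq, Finset.coe_biUnion, Set.mem_iUnion,
      Finset.mem_coe, Finset.mem_Icc, Finset.mem_image, Finset.mem_Ico, hSF]
    constructor
    · rintro ⟨h1, h2⟩
      exact ⟨i, (hrow i).mp (by omega), j, ⟨h1, h2⟩, rfl⟩
    · rintro ⟨i', hi', j', ⟨hj1, hj2⟩, heq⟩
      cases heq
      exact ⟨hj1, hj2⟩
  have hcardSF : SF.card = ∑ i ∈ Finset.Icc a b, (lam i - mu i) := by
    rw [hSF, Finset.card_biUnion]
    · refine Finset.sum_congr rfl ?_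
      intro i _
      rw [Finset.card_image_of_injective _
        (fun x y h => ((Prod.mk.injEq _ _ _ _).mp h).2), Nat.card_Ico]
    · intro x _ y _ hxy
      simp only [Finset.disjoint_left]
      intro p hp hq
      simp only [Finset.mem_image] at hp hq
      obtain ⟨j1, _, h1⟩ := hp
      obtain ⟨j2, _, h2⟩ := hq
      apply hxy
      rw [← h1] at h2
      exact ((Prod.mk.injEq _ _ _ _).mp h2).1.symm
  have ht_sum : t = ∑ i ∈ Finset.Icc a b, (lam i - mu i) := by
    rw [← hcard, hSS, Set.ncard_coe_finset, hcardSF]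
  have hsizeN : t + a + mu b = b + lam a := by
    have htel := telescope lam mu a (b - a)
      (by intro i h1 h2; exact hstep i h1 (by omega)) hsub
    rw [show a + (b - a) = b from by omega, ← ht_sum] at htel
    omega
  have hfst : Prod.fst '' S = Set.Icc a b := by
    ext i
    simp only [Set.mem_image, Set.mem_Icc]
    constructor
    · rintro ⟨c, hc, rfl⟩
      exact (hrow c.1).mp (hcell_row c hc)
    · intro h
      exact ⟨(i, mu i), ⟨le_refl _, (hrow i).mpr h⟩, rfl⟩
  have hht : ribbonHeight lam mu = b - a := by
    unfold ribbonHeight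
    rw [← hSdef, hfst, ← Finset.coe_Icc, Set.ncard_coe_finset, Nat.card_Icc]
    omega
  have hcol : mu b < lam a := lt_of_le_of_lt (hmu.1 hab) haR
  exact ⟨a, b, hab, hrow, hstep, hsizeN, hht, hcol⟩

lemma cols_image {lam mu : ℕ → ℕ} (hlam : IsPartition lam) (hmu : IsPartition mu) {a b : ℕ}
    (hab : a ≤ b) (hrow : ∀ i, mu i < lam i ↔ (a ≤ i ∧ i ≤ b))
    (hstep : ∀ i, a ≤ i → i < b → lam (i + 1) = mu i + 1) :
    Prod.snd '' SkewCells lam mu = Set.Ico (mu b) (lam a) := by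
  ext j
  simp only [Set.mem_image, Set.mem_Ico]
  constructor
  · rintro ⟨c, ⟨h1, h2⟩, rfl⟩
    have hc := (hrow c.1).mp (by omega)
    exact ⟨le_trans (hmu.1 hc.2) h1, lt_of_lt_of_le h2 (hlam.1 hc.1)⟩
  · rintro ⟨h1, h2⟩
    have hPa : j < lam a := h2
    set i0 := Nat.findGreatest (fun i => j < lam i) b with hi0
    have hi0b : i0 ≤ b := Nat.findGreatest_le b
    have hi0a : a ≤ i0 := Nat.le_findGreatest (P := fun i => j < lam i) hab hPa
    have hPi0 : j < lam i0 := Nat.findGreatest_spec (P := fun i => j < lam i) hab hPa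
    have hmui0 : mu i0 ≤ j := by
      rcases eq_or_lt_of_le hi0b with heq | hlt
      · rw [heq]; exact h1
      · have hnp : lam (i0 + 1) ≤ j := not_lt.mp
          (Nat.findGreatest_is_greatest (P := fun i => j < lam i) (n := b) (by omega) (by omega))
        have hst := hstep i0 hi0a (by omega)
        omega
    exact ⟨(i0, j), ⟨hmui0, hPi0⟩, rfl⟩

end Struct

/-! beta set machinery -/

lemma g_strictanti {f : ℕ → ℕ} (hf : Antitone f) {N i j : ℕ}
    (hij : i < j) (hj : j < N) :
    f j + (N - 1 - j) < f i + (N - 1 - i) := by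
  have := hf (le_of_lt hij)
  omega

lemma g_injOn {f : ℕ → ℕ} (hf : Antitone f) {N : ℕ} :
    ∀ i < N, ∀ j < N, f i + (N - 1 - i) = f j + (N - 1 - j) → i = j := by
  intro i hi j hj h
  rcases lt_trichotomy i j with h' | h' | h'
  · exact absurd h (by have := g_strictanti hf h' hj; omega)
  · exact h'
  · exact absurd h (by have := g_strictanti hf h' hi; omega)

lemma mem_betaSet {f : ℕ → ℕ} {N x : ℕ} :
    x ∈ betaSet f N ↔ ∃ i, i < N ∧ f i + (N - 1 - i) = x := by
  simp only [betaSet, Finset.mem_image, Finset.mem_range]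

lemma betaSet_card {f : ℕ → ℕ} (hf : Antitone f) (N : ℕ) :
    (betaSet f N).card = N := by
  rw [betaSet, Finset.card_image_of_injOn, Finset.card_range]
  intro i hi j hj h
  exact g_injOn hf i (Finset.mem_range.mp hi) j (Finset.mem_range.mp hj) h

/-- The key beta-set move lemma for a single ribbon, given structural data. -/
lemma beta_move {t : ℕ} {lam mu : ℕ → ℕ} (hlam : IsPartition lam) (hmu : IsPartition mu)
    (hsub : SubP mu lam) {a b : ℕ}
    (hab : a ≤ b) (hrow : ∀ i, mu i < lam i ↔ (a ≤ i ∧ i ≤ b))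
    (hstep : ∀ i, a ≤ i → i < b → lam (i + 1) = mu i + 1)
    (hsizeN : t + a + mu b = b + lam a)
    {N : ℕ} (hN : ∀ i, N ≤ i → lam i = 0) :
    ∃ b0, b0 ∈ betaSet mu N ∧
    b0 + t ∉ betaSet mu N ∧
    betaSet lam N = insert (b0 + t) ((betaSet mu N).erase b0) ∧
    ((betaSet mu N).filter fun x => b0 < x ∧ x < b0 + t).card = b - a := by
  have hbR : mu b < lam b := (hrow b).mpr ⟨hab, le_refl b⟩
  have haR : mu a < lam a := (hrow a).mpr ⟨le_refl a, hab⟩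
  have hbN : b < N := by
    have : b < plen lam := lt_plen_of_pos hlam.2 (by omega)
    have : plen lam ≤ N := plen_le hN
    omega
  have haN : a < N := by omega
  set b0 := mu b + (N - 1 - b) with hb0
  have hkey : b0 + t = lam a + (N - 1 - a) := by omega
  have hrow_eq : ∀ i, i < a ∨ b < i → lam i = mu i := by
    intro i hi
    have h1 := hsub i
    have h2 := (hrow i).not.mpr (by omega)
    omega
  have hmid : ∀ i, a < i → i ≤ b → lam i + (N - 1 - i) = mu (i - 1) + (N - 1 - (i - 1)) := by
    intro i h1 h2
    have := hstep (i - 1) (by omega) (by omega)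
    rw [show i - 1 + 1 = i from by omega] at this
    omega
  -- b0 ∈ betaSet mu N
  have hmem : b0 ∈ betaSet mu N := mem_betaSet.mpr ⟨b, hbN, rfl⟩
  -- b0 + t ∉ betaSet mu N
  have hnotmem : b0 + t ∉ betaSet mu N := by
    rw [mem_betaSet]
    rintro ⟨j, hj, hjeq⟩
    rcases lt_or_ge j a with h' | h'
    · have h1 : lam j = mu j := hrow_eq j (Or.inl h')
      have h2 := g_strictanti hlam.1 h' haN
      omega
    · have h2 : mu j + (N - 1 - j) ≤ mu a + (N - 1 - a) := by
        rcases eq_or_lt_of_le h' with he | hl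
        · rw [← he]
        · exact le_of_lt (g_strictanti hmu.1 hl hj)
      omega
  refine ⟨b0, hmem, hnotmem, ?_, ?_⟩
  · -- set equality
    ext x
    simp only [Finset.mem_insert, Finset.mem_erase]
    constructor
    · intro hx
      obtain ⟨i, hiN, hieq⟩ := mem_betaSet.mp hx
      rcases lt_or_ge i a with h' | h'
      · right
        have h1 : lam i = mu i := hrow_eq i (Or.inl h')
        constructor
        · intro hxe
          rw [hxe] at hieq  -- ... careful below
          have := g_injOn hmu.1 i hiN b hbN (by omega)
          omega
        · exact mem_betaSet.mpr ⟨i, hiN, by omega⟩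
      · rcases eq_or_lt_of_le h' with he | hl
        · left; rw [← he] at hieq; omega
        · rcases le_or_gt i b with hib | hib
          · right
            have h1 := hmid i hl hib
            constructor
            · intro hxe
              have := g_injOn hmu.1 (i - 1) (by omega) b hbN (by omega)
              omega
            · exact mem_betaSet.mpr ⟨i - 1, by omega, by omega⟩
          · right
            have h1 : lam i = mu i := hrow_eq i (Or.inr hib)
            constructor
            · intro hxe
              have := g_injOn hmu.1 i hiN b hbN (by omega)
              omega
            · exact mem_betaSet.mpr ⟨i, hiN, by omega⟩
    · rintro (hx | ⟨hxne, hx⟩)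
      · exact mem_betaSet.mpr ⟨a, haN, by omega⟩
      · obtain ⟨j, hjN, hjeq⟩ := mem_betaSet.mp hx
        have hjb : j ≠ b := by
          intro he
          rw [he] at hjeq
          omega
        rcases lt_or_ge j a with h' | h'
        · exact mem_betaSet.mpr ⟨j, hjN, by rw [hrow_eq j (Or.inl h')]; omega⟩
        · rcases lt_or_ge j b with hjb2 | hjb2
          · refine mem_betaSet.mpr ⟨j + 1, by omega, ?_⟩
            have := hmid (j + 1) (by omega) (by omega)
            rw [show j + 1 - 1 = j from by omega] at this
            omega
          · exact mem_betaSet.mpr ⟨j, hjN, by rw [hrow_eq j (Or.inr (by omega))]; omega⟩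
  · -- filter card
    have hfe : (betaSet mu N).filter (fun x => b0 < x ∧ x < b0 + t)
        = (Finset.Ico a b).image (fun i => mu i + (N - 1 - i)) := by
      ext x
      simp only [Finset.mem_filter, Finset.mem_image, Finset.mem_Ico]
      constructor
      · rintro ⟨hx, hx1, hx2⟩
        obtain ⟨j, hjN, hjeq⟩ := mem_betaSet.mp hx
        refine ⟨j, ⟨?_, ?_⟩, hjeq⟩
        · by_contra hc
          push_neg at hc
          have h1 : lam j = mu j := hrow_eq j (Or.inl (by omega))
          have h2 := g_strictanti hlam.1 (show j < a from by omega) haN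
          omega
        · by_contra hc
          push_neg at hc
          rcases eq_or_lt_of_le hc with he | hl
          · rw [← he] at hjeq; omega
          · have := g_strictanti hmu.1 hl hjN
            omega
      · rintro ⟨i, ⟨hi1, hi2⟩, hieq⟩
        have hiN : i < N := by omega
        refine ⟨mem_betaSet.mpr ⟨i, hiN, hieq⟩, ?_, ?_⟩
        · have := g_strictanti hmu.1 hi2 hbN
          omega
        · rcases eq_or_lt_of_le hi1 with he | hl
          · rw [← he] at hieq
            have : mu a < lam a := haR
            omega
          · have h2 := g_strictanti hmu.1 hl hiN
            have : mu a < lam a := haR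
            omega
    rw [hfe, Finset.card_image_of_injOn, Nat.card_Ico]
    intro i hi j hj h
    exact g_injOn hmu.1 i (by simp at hi; omega) j (by simp at hj; omega) h


/-- the inversion count of a beta set on the abacus -/
def invc (t : ℕ) (B : Finset ℕ) : ℕ :=
  ((B ×ˢ B).filter fun p : ℕ × ℕ => p.2 < p.1 ∧ p.2 % t < p.1 % t).card

def Fz (t : ℕ) (x y : ℕ) : ZMod 2 := if y < x ∧ y % t < x % t then 1 else 0

lemma invc_cast (t : ℕ) (B : Finset ℕ) :
    (invc t B : ZMod 2) = ∑ x ∈ B, ∑ y ∈ B, Fz t x y := by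
  unfold invc
  rw [Finset.card_filter]
  push_cast
  rw [Finset.sum_product]
  unfold Fz
  refine Finset.sum_congr rfl fun x _ => Finset.sum_congr rfl fun y _ => ?_
  split_ifs <;> simp

lemma sum_FF {t : ℕ} (C : Finset ℕ) (z : ℕ) (hz : z ∉ C) :
    ∑ x ∈ insert z C, ∑ y ∈ insert z C, Fz t x y
      = Fz t z z + (∑ y ∈ C, Fz t z y) + (∑ x ∈ C, Fz t x z)
        + ∑ x ∈ C, ∑ y ∈ C, Fz t x y := by
  rw [Finset.sum_insert hz]
  rw [Finset.sum_insert hz]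
  have : ∀ x ∈ C, ∑ y ∈ insert z C, Fz t x y = Fz t x z + ∑ y ∈ C, Fz t x y :=
    fun x _ => Finset.sum_insert hz
  rw [Finset.sum_congr rfl this, Finset.sum_add_distrib]
  ring

lemma inv_step {t b0 : ℕ} (htpos : 1 ≤ t) {B : Finset ℕ}
    (hb : b0 ∈ B) (hbt : b0 + t ∉ B) :
    (invc t (insert (b0 + t) (B.erase b0)) : ZMod 2)
      = (invc t B : ZMod 2) + ((B.filter fun x => b0 < x ∧ x < b0 + t).card : ZMod 2) := by
  set C := B.erase b0 with hC
  have hb0C : b0 ∉ C := Finset.notMem_erase _ _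
  have hbtC : b0 + t ∉ C := fun h => hbt (Finset.mem_of_mem_erase h)
  have hBC : B = insert b0 C := (Finset.insert_erase hb).symm
  have hfilter : (B.filter fun x => b0 < x ∧ x < b0 + t)
      = C.filter fun x => b0 < x ∧ x < b0 + t := by
    rw [hBC, Finset.filter_insert, if_neg (by omega)]
  rw [invc_cast, invc_cast, hfilter, sum_FF C (b0 + t) hbtC]
  rw [hBC, sum_FF C b0 hb0C]
  have hzz : Fz t (b0 + t) (b0 + t) = 0 := by
    unfold Fz; rw [if_neg (by omega)]
  have hzz2 : Fz t b0 b0 = 0 := by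
    unfold Fz; rw [if_neg (by omega)]
  rw [hzz, hzz2]
  have hcf : ((C.filter fun x => b0 < x ∧ x < b0 + t).card : ZMod 2)
      = ∑ c ∈ C, (if b0 < c ∧ c < b0 + t then (1 : ZMod 2) else 0) := by
    rw [Finset.card_filter]
    push_cast
    refine Finset.sum_congr rfl fun x _ => ?_
    split_ifs <;> simp
  rw [hcf]
  have hmod : (b0 + t) % t = b0 % t := Nat.add_mod_right b0 t
  have key : ∀ c ∈ C, Fz t (b0 + t) c + Fz t c (b0 + t)
      = Fz t b0 c + Fz t c b0 + (if b0 < c ∧ c < b0 + t then (1 : ZMod 2) else 0) := by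
    intro c hc
    have hc1 : c ≠ b0 := fun h => hb0C (h ▸ hc)
    have hc2 : c ≠ b0 + t := fun h => hbtC (h ▸ hc)
    have hsep : c % t = b0 % t → (c + t ≤ b0 ∨ b0 + t ≤ c) := by
      intro h
      rcases lt_trichotomy c b0 with h' | h' | h'
      · exact Or.inl (mod_gap htpos h' h)
      · exact absurd h' hc1
      · exact Or.inr (mod_gap htpos h' h.symm)
    unfold Fz
    rw [hmod]
    split_ifs <;> first | rfl | decide | (exfalso; omega)
  have hsum : ∑ c ∈ C, (Fz t (b0 + t) c + Fz t c (b0 + t))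
      = ∑ c ∈ C, (Fz t b0 c + Fz t c b0 + (if b0 < c ∧ c < b0 + t then (1 : ZMod 2) else 0)) :=
    Finset.sum_congr rfl key
  rw [Finset.sum_add_distrib] at hsum
  rw [Finset.sum_add_distrib, Finset.sum_add_distrib] at hsum
  -- combine
  have := hsum
  ring_nf
  ring_nf at this
  linear_combination this


/-- the Z-valued quotient-size functional -/
def QZ (t N : ℕ) (f : ℕ → ℕ) : ℤ :=
  (∑ x ∈ betaSet f N, ((x / t : ℕ) : ℤ))
    - ∑ r ∈ Finset.range t, ((((betaSet f N).filter (fun x => x % t = r)).card.choose 2 : ℕ) : ℤ)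

lemma list_getD_sum (L : List ℕ) (g : ℕ → ℤ) :
    ∑ j ∈ range L.length, g (L.getD j 0) = (L.map g).sum := by
  induction L with
  | nil => simp
  | cons a L ih =>
    rw [List.length_cons, Finset.sum_range_succ']
    simp only [List.getD_cons_succ, List.getD_cons_zero, List.map_cons, List.sum_cons]
    rw [ih]
    ring

lemma sum_range_cast_choose (c : ℕ) :
    ∑ k ∈ range c, (k : ℤ) = (c.choose 2 : ℤ) := by
  induction c with
  | zero => simp
  | succ n ih =>
    rw [Finset.sum_range_succ, ih]
    have : (n + 1).choose 2 = n.choose 1 + n.choose 2 := Nat.choose_succ_succ n 1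
    rw [this, Nat.choose_one_right]
    push_cast
    ring

lemma sum_shift_neg_choose (c : ℕ) :
    ∑ k ∈ range c, ((k : ℤ) + 1 - c) = -(c.choose 2 : ℤ) := by
  induction c with
  | zero => simp
  | succ n ih =>
    rw [Finset.sum_range_succ]
    have h2 : ∑ k ∈ range n, ((k : ℤ) + 1 - ((n + 1 : ℕ) : ℤ))
        = ∑ k ∈ range n, (((k : ℤ) + 1 - n) + (-1)) := by
      refine Finset.sum_congr rfl fun k _ => ?_
      push_cast; ring
    rw [h2, Finset.sum_add_distrib, ih, Finset.sum_const, Finset.card_range]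
    have h3 : (n + 1).choose 2 = n.choose 2 + n := by
      have h := Nat.choose_succ_succ n 1
      norm_num at h
      omega
    rw [h3]
    push_cast
    ring

lemma quot_psize_r {t : ℕ} (htpos : 1 ≤ t) (f : ℕ → ℕ) (r : ℕ) :
    (psize (tQuot t f r) : ℤ)
      = (∑ x ∈ (betaSet f (t * (plen f + 1))).filter (fun x => x % t = r), ((x / t : ℕ) : ℤ))
        - ((((betaSet f (t * (plen f + 1))).filter (fun x => x % t = r)).card.choose 2 : ℕ) : ℤ) := by
  set N := t * (plen f + 1) with hN
  set S := (betaSet f N).filter (fun x => x % t = r) with hS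
  set c := S.card with hc
  set L := S.sort (· ≤ ·) with hL
  have hq : ∀ k, tQuot t f r k
      = if k < c then L.getD (c - 1 - k) 0 / t + (k + 1) - c else 0 := by
    intro k
    simp only [tQuot, ← hN, ← hS, ← hc, ← hL]
  have hlen : L.length = c := Finset.length_sort _
  have hmemL : ∀ j (hj : j < c), L.getD j 0 % t = r := by
    intro j hj
    have hj' : j < L.length := by omega
    rw [List.getD_eq_getElem L 0 hj']
    have : L.get ⟨j, hj'⟩ ∈ L := List.get_mem L ⟨j, hj'⟩
    have : L.get ⟨j, hj'⟩ ∈ S := (Finset.mem_sort _).mp this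
    exact (Finset.mem_filter.mp this).2
  have hsorted : List.SortedLT L := Finset.sortedLT_sort S
  have hG : ∀ j, j < c → j ≤ L.getD j 0 / t := by
    intro j
    induction j with
    | zero => intro _; exact Nat.zero_le _
    | succ n ih =>
      intro hj
      have hn : n < c := by omega
      have hlt : L.getD n 0 < L.getD (n + 1) 0 := by
        rw [List.getD_eq_getElem L 0 (n := n) (by omega), List.getD_eq_getElem L 0 (n := n + 1) (by omega)]
        exact @hsorted ⟨n, by omega⟩ ⟨n + 1, by omega⟩
          (by exact Fin.mk_lt_mk.mpr (by omega))
      have hgap : L.getD n 0 + t ≤ L.getD (n + 1) 0 :=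
        mod_gap htpos hlt (by rw [hmemL n hn, hmemL (n + 1) hj])
      have h1 : L.getD n 0 / t + 1 ≤ L.getD (n + 1) 0 / t := by
        calc L.getD n 0 / t + 1 = (L.getD n 0 + t) / t := (Nat.add_div_right _ htpos).symm
          _ ≤ L.getD (n + 1) 0 / t := Nat.div_le_div_right hgap
      have := ih hn
      omega
  have hzero : ∀ k, c ≤ k → tQuot t f r k = 0 := by
    intro k hk
    rw [hq k, if_neg (by omega)]
  have hps : psize (tQuot t f r) = ∑ k ∈ range c, tQuot t f r k := psize_eq_sum hzero
  have hcast : ∀ k, k < c →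
      ((tQuot t f r k : ℤ)) = ((L.getD (c - 1 - k) 0 / t : ℕ) : ℤ) + (k + 1) - c := by
    intro k hk
    rw [hq k, if_pos hk]
    have h1 : c - 1 - k ≤ L.getD (c - 1 - k) 0 / t := hG _ (by omega)
    push_cast [Nat.cast_sub (show c ≤ L.getD (c - 1 - k) 0 / t + (k + 1) from by omega)]
    ring
  have step1 : (psize (tQuot t f r) : ℤ)
      = ∑ k ∈ range c, (((L.getD (c - 1 - k) 0 / t : ℕ) : ℤ) + (k + 1) - c) := by
    rw [hps, Nat.cast_sum]
    exact Finset.sum_congr rfl fun k hk => hcast k (Finset.mem_range.mp hk)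
  have split2 : ∑ k ∈ range c, (((L.getD (c - 1 - k) 0 / t : ℕ) : ℤ) + (k + 1) - c)
      = (∑ k ∈ range c, ((L.getD (c - 1 - k) 0 / t : ℕ) : ℤ))
        + ∑ k ∈ range c, ((k : ℤ) + 1 - c) := by
    rw [← Finset.sum_add_distrib]
    exact Finset.sum_congr rfl fun k _ => by ring
  have refl1 : ∑ k ∈ range c, ((L.getD (c - 1 - k) 0 / t : ℕ) : ℤ)
      = ∑ j ∈ range c, ((L.getD j 0 / t : ℕ) : ℤ) :=
    Finset.sum_range_reflect (fun j => ((L.getD j 0 / t : ℕ) : ℤ)) c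
  have sumS : ∑ j ∈ range c, ((L.getD j 0 / t : ℕ) : ℤ) = ∑ x ∈ S, ((x / t : ℕ) : ℤ) := by
    have h1 := list_getD_sum L (fun x => ((x / t : ℕ) : ℤ))
    rw [hlen] at h1
    rw [h1]
    have hperm : List.Perm L S.toList := Finset.sort_perm_toList S _
    rw [List.Perm.sum_eq (List.Perm.map _ hperm), Finset.sum_map_toList]
  rw [step1, split2, refl1, sumS, sum_shift_neg_choose c]
  ring

lemma quot_psize {t : ℕ} (htpos : 1 ≤ t) (f : ℕ → ℕ) :
    (∑ r ∈ range t, (psize (tQuot t f r) : ℤ)) = QZ t (t * (plen f + 1)) f := by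
  unfold QZ
  rw [Finset.sum_congr rfl fun r (_ : r ∈ range t) => quot_psize_r htpos f r,
    Finset.sum_sub_distrib,
    Finset.sum_fiberwise_of_maps_to (fun x _ => Finset.mem_range.mpr (Nat.mod_lt x htpos)) _]


lemma choose_two_succ (m : ℕ) : (m + 1).choose 2 = m.choose 2 + m := by
  have h := Nat.choose_succ_succ m 1
  norm_num at h
  omega

lemma betaSet_succ {f : ℕ → ℕ} {N t : ℕ} (htpos : 1 ≤ t) (hN : ∀ i, N ≤ i → f i = 0) :
    betaSet f (N + t) = (betaSet f N).image (· + t) ∪ Finset.range t := by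
  ext x
  simp only [Finset.mem_union, Finset.mem_image, Finset.mem_range]
  rw [mem_betaSet]
  constructor
  · rintro ⟨i, hiN, hieq⟩
    rcases lt_or_ge i N with h | h
    · left
      exact ⟨f i + (N - 1 - i), mem_betaSet.mpr ⟨i, h, rfl⟩, by omega⟩
    · right
      have := hN i h
      omega
  · rintro (⟨y, hy, hyeq⟩ | hx)
    · obtain ⟨i, hiN, hieq⟩ := mem_betaSet.mp hy
      exact ⟨i, by omega, by omega⟩
    · refine ⟨N + t - 1 - x, by omega, ?_⟩
      rw [hN _ (by omega)]
      omega

lemma QZ_shift {t N : ℕ} {f : ℕ → ℕ} (htpos : 1 ≤ t) (hfa : Antitone f)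
    (hN : ∀ i, N ≤ i → f i = 0) : QZ t (N + t) f = QZ t N f := by
  have hBB := betaSet_succ htpos hN
  have hdisj : Disjoint ((betaSet f N).image (· + t)) (Finset.range t) := by
    rw [Finset.disjoint_left]
    intro x hx hx2
    simp only [Finset.mem_image] at hx
    obtain ⟨y, _, hy⟩ := hx
    simp only [Finset.mem_range] at hx2
    omega
  have hinj : ∀ x ∈ betaSet f N, ∀ y ∈ betaSet f N, x + t = y + t → x = y := by
    intro x _ y _ h; omega
  have h1 : ∀ x ∈ betaSet f N, (((x + t) / t : ℕ) : ℤ) = ((x / t : ℕ) : ℤ) + 1 := by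
    intro x _
    rw [Nat.add_div_right _ htpos]
    push_cast; ring
  have h2 : ∀ j ∈ Finset.range t, ((j / t : ℕ) : ℤ) = 0 := by
    intro j hj
    rw [Nat.div_eq_of_lt (Finset.mem_range.mp hj)]
    simp
  have hsum : ∑ x ∈ betaSet f (N + t), ((x / t : ℕ) : ℤ)
      = (∑ x ∈ betaSet f N, ((x / t : ℕ) : ℤ)) + N := by
    rw [hBB, Finset.sum_union hdisj, Finset.sum_image hinj,
      Finset.sum_congr rfl h1, Finset.sum_add_distrib, Finset.sum_const, betaSet_card hfa N,
      Finset.sum_congr rfl h2, Finset.sum_const_zero, nsmul_eq_mul, mul_one]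
    ring
  have hmr : ∀ r ∈ Finset.range t, ((betaSet f (N + t)).filter (fun x => x % t = r)).card
      = ((betaSet f N).filter (fun x => x % t = r)).card + 1 := by
    intro r hrm
    have hr : r < t := Finset.mem_range.mp hrm
    rw [hBB, Finset.filter_union]
    have himg : ((betaSet f N).image (· + t)).filter (fun x => x % t = r)
        = ((betaSet f N).filter (fun x => x % t = r)).image (· + t) := by
      ext x
      simp only [Finset.mem_filter, Finset.mem_image]
      constructor
      · rintro ⟨⟨y, hy, rfl⟩, hm⟩
        exact ⟨y, ⟨hy, by rwa [Nat.add_mod_right] at hm⟩, rfl⟩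
      · rintro ⟨y, ⟨hy, hm⟩, rfl⟩
        exact ⟨⟨y, hy, rfl⟩, by rwa [Nat.add_mod_right]⟩
    have hrng : (Finset.range t).filter (fun x => x % t = r) = {r} := by
      ext j
      simp only [Finset.mem_filter, Finset.mem_range, Finset.mem_singleton]
      constructor
      · rintro ⟨hj1, hj2⟩
        rw [Nat.mod_eq_of_lt hj1] at hj2
        exact hj2
      · rintro rfl
        exact ⟨hr, Nat.mod_eq_of_lt hr⟩
    have hdisj2 : Disjoint (((betaSet f N).filter (fun x => x % t = r)).image (· + t))
        ({r} : Finset ℕ) := by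
      rw [Finset.disjoint_left]
      intro x hx h2
      simp only [Finset.mem_image, Finset.mem_filter] at hx
      obtain ⟨y, _, rfl⟩ := hx
      simp only [Finset.mem_singleton] at h2
      omega
    rw [himg, hrng, Finset.card_union_of_disjoint hdisj2,
      Finset.card_image_of_injOn (fun x _ y _ h => by omega), Finset.card_singleton]
  have hchoose : ∑ r ∈ Finset.range t,
        (((betaSet f (N + t)).filter (fun x => x % t = r)).card.choose 2 : ℤ)
      = (∑ r ∈ Finset.range t,
          (((betaSet f N).filter (fun x => x % t = r)).card.choose 2 : ℤ))
        + ∑ r ∈ Finset.range t, (((betaSet f N).filter (fun x => x % t = r)).card : ℤ) := by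
    rw [← Finset.sum_add_distrib]
    refine Finset.sum_congr rfl fun r hrm => ?_
    rw [hmr r hrm, choose_two_succ]
    push_cast; ring
  have hfib : ∑ r ∈ Finset.range t, (((betaSet f N).filter (fun x => x % t = r)).card : ℤ)
      = (N : ℤ) := by
    have hcards : ∑ r ∈ Finset.range t, ((betaSet f N).filter (fun x => x % t = r)).card = N := by
      rw [← Finset.card_eq_sum_card_fiberwise
        (f := fun x => x % t) (s := betaSet f N) (t := Finset.range t)
        (fun x _ => Finset.mem_range.mpr (Nat.mod_lt x htpos))]
      exact betaSet_card hfa N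
    exact_mod_cast congrArg (Nat.cast : ℕ → ℤ) hcards
  unfold QZ
  rw [hsum, hchoose, hfib]
  ring

lemma QZ_shift_mul {t N : ℕ} {f : ℕ → ℕ} (htpos : 1 ≤ t) (hfa : Antitone f)
    (hN : ∀ i, N ≤ i → f i = 0) : ∀ m, QZ t (N + m * t) f = QZ t N f := by
  intro m
  induction m with
  | zero => simp
  | succ m ih =>
    rw [show N + (m + 1) * t = (N + m * t) + t from by ring]
    rw [QZ_shift htpos hfa (fun i hi => hN i (by omega))]
    exact ih

lemma QZ_move {t N b0 : ℕ} {lam mu : ℕ → ℕ} (htpos : 1 ≤ t)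
    (hmem : b0 ∈ betaSet mu N) (hnot : b0 + t ∉ betaSet mu N)
    (heq : betaSet lam N = insert (b0 + t) ((betaSet mu N).erase b0)) :
    QZ t N lam = QZ t N mu + 1 := by
  have hsum : ∑ x ∈ betaSet lam N, ((x / t : ℕ) : ℤ)
      = (∑ x ∈ betaSet mu N, ((x / t : ℕ) : ℤ)) + 1 := by
    rw [heq, Finset.sum_insert (fun h => hnot (Finset.mem_of_mem_erase h))]
    have h2 := Finset.add_sum_erase (betaSet mu N) (fun x => ((x / t : ℕ) : ℤ)) hmem
    rw [Nat.add_div_right _ htpos]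
    push_cast
    push_cast at h2
    linarith [h2]
  have hfil : ∀ r, ((betaSet lam N).filter (fun x => x % t = r)).card
      = ((betaSet mu N).filter (fun x => x % t = r)).card := by
    intro r
    rw [heq, Finset.filter_insert, Finset.filter_erase]
    by_cases hr : (b0 + t) % t = r
    · rw [if_pos hr]
      have hb0r : b0 % t = r := by rwa [Nat.add_mod_right] at hr
      have hb0f : b0 ∈ (betaSet mu N).filter (fun x => x % t = r) :=
        Finset.mem_filter.mpr ⟨hmem, hb0r⟩
      rw [Finset.card_insert_of_notMem
        (fun h => hnot ((Finset.mem_filter.mp (Finset.mem_of_mem_erase h)).1)),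
        Finset.card_erase_of_mem hb0f]
      have : 1 ≤ ((betaSet mu N).filter (fun x => x % t = r)).card :=
        Finset.card_pos.mpr ⟨b0, hb0f⟩
      omega
    · rw [if_neg hr]
      have hnm : b0 ∉ (betaSet mu N).filter (fun x => x % t = r) := by
        intro h
        rw [Nat.add_mod_right] at hr
        exact hr (Finset.mem_filter.mp h).2
      rw [Finset.erase_eq_of_notMem hnm]
  unfold QZ
  rw [hsum]
  have : ∑ r ∈ Finset.range t, (((betaSet lam N).filter (fun x => x % t = r)).card.choose 2 : ℤ)
      = ∑ r ∈ Finset.range t, (((betaSet mu N).filter (fun x => x % t = r)).card.choose 2 : ℤ) :=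
    Finset.sum_congr rfl fun r _ => by rw [hfil r]
  rw [this]
  ring


/-! conjugation of ribbons -/

lemma skew_conj {lam mu : ℕ → ℕ} (hlam : IsPartition lam) (hmu : IsPartition mu) :
    SkewCells (conjP lam) (conjP mu) = Prod.swap '' SkewCells lam mu := by
  ext ⟨i, j⟩
  rw [Set.image_swap_eq_preimage_swap]
  simp only [SkewCells, Set.mem_setOf_eq, Set.mem_preimage, Prod.swap_prod_mk]
  have h1 : j < conjP lam i ↔ i < lam j := conj_lt_iff hlam i j
  have h2 : conjP mu i ≤ j ↔ mu j ≤ i := by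
    rw [← not_lt, ← not_lt, conj_lt_iff hmu]
  rw [h1, h2]

lemma cellAdj_swap {c d : ℕ × ℕ} (h : CellAdj c d) : CellAdj c.swap d.swap := by
  rcases h with ⟨h1, h2⟩ | ⟨h1, h2⟩
  · exact Or.inr ⟨h1, h2⟩
  · exact Or.inl ⟨h1, h2⟩

lemma isRibbon_conj {t : ℕ} {lam mu : ℕ → ℕ} (hlam : IsPartition lam)
    (hmu : IsPartition mu) (hR : IsRibbon t lam mu) :
    IsRibbon t (conjP lam) (conjP mu) := by
  obtain ⟨hsub, hcard, hconn, h2x2⟩ := hR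
  have hsc := skew_conj hlam hmu
  refine ⟨conj_subP hlam hsub, ?_, ?_, ?_⟩
  · rw [hsc, Set.ncard_image_of_injective _ Prod.swap_injective]
    exact hcard
  · rw [hsc]
    rintro c ⟨c0, hc0, rfl⟩ d ⟨d0, hd0, rfl⟩
    refine Relation.ReflTransGen.lift Prod.swap ?_ _ _ (hconn c0 hc0 d0 hd0)
    rintro x y ⟨hx, hy, hadj⟩
    exact ⟨⟨x, hx, rfl⟩, ⟨y, hy, rfl⟩, cellAdj_swap hadj⟩
  · rw [hsc]
    rintro ⟨i, j, h1, h2, h3, h4⟩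
    rw [Set.image_swap_eq_preimage_swap] at h1 h2 h3 h4
    exact h2x2 ⟨j, i, h1, h3, h2, h4⟩

lemma ribbon_conj_sum {t : ℕ} {lam mu : ℕ → ℕ} (hlam : IsPartition lam)
    (hmu : IsPartition mu) (htpos : 1 ≤ t) (hR : IsRibbon t lam mu) :
    ribbonHeight lam mu + ribbonHeight (conjP lam) (conjP mu) = t - 1 := by
  obtain ⟨a, b, hab, hrow, hstep, hsizeN, hht, hcol⟩ := ribbon_struct hlam hmu htpos hR
  have hcols := cols_image hlam hmu hab hrow hstep
  have hfsteq : Prod.fst '' (Prod.swap '' SkewCells lam mu) = Prod.snd '' SkewCells lam mu := by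
    rw [Set.image_image]
    rfl
  have hh2 : ribbonHeight (conjP lam) (conjP mu) = (lam a - mu b) - 1 := by
    unfold ribbonHeight
    rw [skew_conj hlam hmu, hfsteq, hcols, ← Finset.coe_Ico, Set.ncard_coe_finset, Nat.card_Ico]
  rw [hht, hh2]
  omega

/-! decompositions -/

lemma decomp_parity {t : ℕ} (htpos : 1 ≤ t) (mu : ℕ → ℕ) (ν : ℕ → ℕ → ℕ) (N : ℕ) :
    ∀ k lam, IsRibbonDecomp t mu lam k ν → (∀ i, N ≤ i → lam i = 0) →
      (decompHeight ν k : ZMod 2)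
        = invc t (betaSet mu N) + invc t (betaSet lam N) := by
  intro k
  induction k with
  | zero =>
    intro lam hd hN
    have h0 : mu = lam := by rw [← hd.1, hd.2.1]
    have : decompHeight ν 0 = 0 := by simp [decompHeight]
    rw [this, h0]
    push_cast
    exact (zmod2_add_self _).symm
  | succ k ih =>
    intro lam hd hN
    have hdm : IsRibbonDecomp t mu (ν k) k ν :=
      ⟨hd.1, rfl, fun i hi => hd.2.2.1 i (by omega), fun i hi => hd.2.2.2 i (by omega)⟩
    have hrib : IsRibbon t lam (ν k) := by
      rw [← hd.2.1]; exact hd.2.2.2 k (by omega)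
    have hmidP : IsPartition (ν k) := hd.2.2.1 k (by omega)
    have hlamP : IsPartition lam := by
      rw [← hd.2.1]; exact hd.2.2.1 (k + 1) (le_refl _)
    have hNmid : ∀ i, N ≤ i → ν k i = 0 := by
      intro i hi
      have h1 := hrib.1 i
      have h2 := hN i hi
      omega
    obtain ⟨a, b, hab, hrow, hstep, hsizeN, hht, hcol⟩ :=
      ribbon_struct hlamP hmidP htpos hrib
    obtain ⟨b0, hmem, hnot, heq, hfc⟩ :=
      beta_move hlamP hmidP hrib.1 hab hrow hstep hsizeN hN
    have hstep2 := inv_step htpos hmem hnot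
    rw [← heq] at hstep2
    have ihh := ih (ν k) hdm hNmid
    have hht2 : ribbonHeight (ν (k + 1)) (ν k) = b - a := by
      rw [hd.2.1]; exact hht
    have hdh : decompHeight ν (k + 1) = decompHeight ν k + (b - a) := by
      unfold decompHeight
      rw [Finset.sum_range_succ, hht2]
    rw [hdh]
    push_cast
    rw [ihh, ← hfc, hstep2]
    ring

lemma decomp_QZ {t : ℕ} (htpos : 1 ≤ t) (mu : ℕ → ℕ) (ν : ℕ → ℕ → ℕ) (N : ℕ) :
    ∀ k lam, IsRibbonDecomp t mu lam k ν → (∀ i, N ≤ i → lam i = 0) →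
      QZ t N lam = QZ t N mu + k := by
  intro k
  induction k with
  | zero =>
    intro lam hd hN
    have h0 : mu = lam := by rw [← hd.1, hd.2.1]
    rw [h0]
    simp
  | succ k ih =>
    intro lam hd hN
    have hdm : IsRibbonDecomp t mu (ν k) k ν :=
      ⟨hd.1, rfl, fun i hi => hd.2.2.1 i (by omega), fun i hi => hd.2.2.2 i (by omega)⟩
    have hrib : IsRibbon t lam (ν k) := by
      rw [← hd.2.1]; exact hd.2.2.2 k (by omega)
    have hmidP : IsPartition (ν k) := hd.2.2.1 k (by omega)
    have hlamP : IsPartition lam := by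
      rw [← hd.2.1]; exact hd.2.2.1 (k + 1) (le_refl _)
    have hNmid : ∀ i, N ≤ i → ν k i = 0 := by
      intro i hi
      have h1 := hrib.1 i
      have h2 := hN i hi
      omega
    obtain ⟨a, b, hab, hrow, hstep, hsizeN, hht, hcol⟩ :=
      ribbon_struct hlamP hmidP htpos hrib
    obtain ⟨b0, hmem, hnot, heq, hfc⟩ :=
      beta_move hlamP hmidP hrib.1 hab hrow hstep hsizeN hN
    rw [QZ_move htpos hmem hnot heq, ih (ν k) hdm hNmid]
    push_cast
    ring

lemma conj_decomp {t k : ℕ} {mu lam : ℕ → ℕ} {ν : ℕ → ℕ → ℕ}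
    (hd : IsRibbonDecomp t mu lam k ν) :
    IsRibbonDecomp t (conjP mu) (conjP lam) k (fun i => conjP (ν i)) := by
  refine ⟨show conjP (ν 0) = conjP mu from by rw [hd.1],
    show conjP (ν k) = conjP lam from by rw [hd.2.1],
    fun i hi => conj_isPartition (hd.2.2.1 i hi), ?_⟩
  intro i hi
  exact isRibbon_conj (hd.2.2.1 (i + 1) (by omega)) (hd.2.2.1 i (by omega)) (hd.2.2.2 i hi)

lemma conj_decomp_height {t k : ℕ} {mu lam : ℕ → ℕ} {ν : ℕ → ℕ → ℕ} (htpos : 1 ≤ t)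
    (hd : IsRibbonDecomp t mu lam k ν) :
    decompHeight ν k + decompHeight (fun i => conjP (ν i)) k = k * (t - 1) := by
  unfold decompHeight
  rw [← Finset.sum_add_distrib]
  have : ∀ i ∈ Finset.range k,
      ribbonHeight (ν (i + 1)) (ν i) + ribbonHeight (conjP (ν (i + 1))) (conjP (ν i))
        = t - 1 := by
    intro i hi
    have hik := Finset.mem_range.mp hi
    exact ribbon_conj_sum (hd.2.2.1 (i + 1) (by omega)) (hd.2.2.1 i (by omega)) htpos
      (hd.2.2.2 i hik)
  rw [Finset.sum_congr rfl this, Finset.sum_const, Finset.card_range, smul_eq_mul]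

end SgnAux

/-- **Lemma.** For a `t`-tileable skew shape `λ/μ`,
`sgn_t(λ/μ) · sgn_t(λ'/μ') = (-1)^{(t-1)(|λ^{(0)}|+⋯+|λ^{(t-1)}| - |μ^{(0)}|-⋯-|μ^{(t-1)}|)}`
(the signs being `(-1)^{ht(D)}` for any ribbon decompositions of `λ/μ` and `λ'/μ'`). -/
theorem sgn_skew_conj (t : ℕ) (ht : 2 ≤ t) (lam mu : ℕ → ℕ)
    (hlam : IsPartition lam) (hmu : IsPartition mu) (hsub : SubP mu lam)
    (htile : Tileable t mu lam) :
    ∀ k ν k' ν', IsRibbonDecomp t mu lam k ν →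
      IsRibbonDecomp t (conjP mu) (conjP lam) k' ν' →
      (-1 : ℤ) ^ decompHeight ν k * (-1 : ℤ) ^ decompHeight ν' k' =
        msign (((t : ℤ) - 1) *
          ((∑ r ∈ Finset.range t, (psize (tQuot t lam r) : ℤ)) -
            ∑ r ∈ Finset.range t, (psize (tQuot t mu r) : ℤ))) := by
  intro k ν k' ν' hd hd'
  have htpos : 1 ≤ t := by omega
  have hNlam : ∀ i, t * (plen lam + 1) ≤ i → lam i = 0 := by
    intro i hi
    have h1 : plen lam + 1 ≤ t * (plen lam + 1) := Nat.le_mul_of_pos_left _ (by omega)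
    exact SgnAux.plen_zero hlam.2 i (by omega)
  -- quotient difference = k
  have hQl := SgnAux.quot_psize htpos lam
  have hQm := SgnAux.quot_psize htpos mu
  have hplm : plen mu ≤ plen lam := SgnAux.subP_plen_le hsub hlam.2
  have hNmu : ∀ i, t * (plen mu + 1) ≤ i → mu i = 0 := by
    intro i hi
    have h1 : plen mu + 1 ≤ t * (plen mu + 1) := Nat.le_mul_of_pos_left _ (by omega)
    exact SgnAux.plen_zero hmu.2 i (by omega)
  have e1 : t * (plen mu + 1) + (plen lam - plen mu) * t = t * (plen lam + 1) := by
    calc t * (plen mu + 1) + (plen lam - plen mu) * t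
        = (plen mu + 1 + (plen lam - plen mu)) * t := by ring
      _ = (plen lam + 1) * t := by
          rw [show plen mu + 1 + (plen lam - plen mu) = plen lam + 1 from by omega]
      _ = t * (plen lam + 1) := by ring
  have hshift : SgnAux.QZ t (t * (plen mu + 1)) mu = SgnAux.QZ t (t * (plen lam + 1)) mu := by
    have h := SgnAux.QZ_shift_mul htpos hmu.1 hNmu (plen lam - plen mu)
    rw [e1] at h
    exact h.symm
  have hchain := SgnAux.decomp_QZ htpos mu ν (t * (plen lam + 1)) k lam hd hNlam
  have hdiff : (∑ r ∈ Finset.range t, (psize (tQuot t lam r) : ℤ))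
      - (∑ r ∈ Finset.range t, (psize (tQuot t mu r) : ℤ)) = (k : ℤ) := by
    rw [hQl, hQm, hshift]
    linarith [hchain]
  -- heights
  have hpar1 := SgnAux.decomp_parity htpos mu ν (t * (plen lam + 1)) k lam hd hNlam
  have hclam : IsPartition (conjP lam) := SgnAux.conj_isPartition hlam
  have hN1 : ∀ i, plen (conjP lam) ≤ i → conjP lam i = 0 := SgnAux.plen_zero hclam.2
  have hpar2 := SgnAux.decomp_parity htpos (conjP mu) ν' (plen (conjP lam)) k' (conjP lam) hd' hN1
  have hcd := SgnAux.conj_decomp hd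
  have hpar3 := SgnAux.decomp_parity htpos (conjP mu) (fun i => conjP (ν i))
    (plen (conjP lam)) k (conjP lam) hcd hN1
  have hsumh := SgnAux.conj_decomp_height htpos hd
  have hz : ((decompHeight ν k + decompHeight ν' k' : ℕ) : ZMod 2)
      = (((t - 1) * k : ℕ) : ZMod 2) := by
    have h23 : ((decompHeight ν' k' : ℕ) : ZMod 2)
        = ((decompHeight (fun i => conjP (ν i)) k : ℕ) : ZMod 2) := by
      rw [hpar2, hpar3]
    calc ((decompHeight ν k + decompHeight ν' k' : ℕ) : ZMod 2)
        = ((decompHeight ν k : ℕ) : ZMod 2) + ((decompHeight ν' k' : ℕ) : ZMod 2) := by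
          push_cast; ring
      _ = ((decompHeight ν k : ℕ) : ZMod 2)
            + ((decompHeight (fun i => conjP (ν i)) k : ℕ) : ZMod 2) := by rw [h23]
      _ = ((decompHeight ν k + decompHeight (fun i => conjP (ν i)) k : ℕ) : ZMod 2) := by
          push_cast; ring
      _ = ((k * (t - 1) : ℕ) : ZMod 2) := by rw [hsumh]
      _ = (((t - 1) * k : ℕ) : ZMod 2) := by rw [Nat.mul_comm]
  rw [hdiff]
  have hcast : ((t : ℤ) - 1) * (k : ℤ) = (((t - 1) * k : ℕ) : ℤ) := by
    push_cast [Nat.cast_sub (show 1 ≤ t from htpos)]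
    ring
  rw [hcast, SgnAux.msign_natCast, ← pow_add]
  exact SgnAux.neg_one_pow_congr hz

end
end
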